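/- arXiv:1204.3676 — 6 statements merged into one kernel-verified Lean document; each statement's English description precedes it below -/
import Mathlib

section
/- For every i ∈ {1,…,n}, every t ≥ 0 and every x ∈ ℝ one has the identity: X(t, Z^0(x) + λ̃_i·t) − λ̄_i·t = x + ∫_{Z^0(x)}^{Z^0(x)+λ̃_i·t} (1/N(w̃^0(ξ)) − 1/N(w̄)) dξ + ∫_0^t (u(w̃(τ, Z^0(x) + λ̃_i·t)) − u(w̄)) dτ. -/
open MeasureTheory Filter Set
open scoped ENNReal NNReal

lemma my_intervalIntegrable_of_bounded {f : ℝ → ℝ} (hf : Measurable f) {B : ℝ}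
    (hB : ∀ x, |f x| ≤ B) (a b : ℝ) : IntervalIntegrable f volume a b := by
  constructor <;>
  · refine Measure.integrableOn_of_bounded measure_Ioc_lt_top.ne
      hf.aestronglyMeasurable (M := B) ?_
    exact ae_of_all _ (fun x => by simpa [Real.norm_eq_abs] using hB x)

theorem stmt_1
    (n : ℕ) (hn : 2 ≤ n)
    (K : Set (Fin n → ℝ)) (hK : IsCompact K)
    (lam : Fin n → (Fin n → ℝ) → ℝ) (hlam : ∀ i, ContDiff ℝ 1 (lam i))
    (N : (Fin n → ℝ) → ℝ) (hN : ContDiff ℝ 1 N)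
    (c C : ℝ) (hc : 0 < c) (hcC : c ≤ C)
    (hNbd : ∀ w ∈ convexHull ℝ K, c ≤ N w ∧ N w ≤ C)
    (M : (Fin n → ℝ) → ℝ) (tlam : Fin n → ℝ)
    (hrich : ∀ (w : Fin n → ℝ) (i : Fin n), N w * lam i w - tlam i = M w)
    (hstrict : ∀ w : Fin n → ℝ, StrictMono (fun i => lam i w))
    (hlindeg : ∀ (i : Fin n) (w v : Fin n → ℝ),
      (∀ j, j ≠ i → w j = v j) → lam i w = lam i v)
    (wbar : Fin n → ℝ) (hwbarK : wbar ∈ K)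
    (w0 : ℝ → Fin n → ℝ) (hw0m : Measurable w0) (hw0K : ∀ x, w0 x ∈ K)
    (hw0L1 : Integrable (fun x => w0 x - wbar))
    (Z0 X0 : ℝ → ℝ)
    (hZ0 : ∀ x, Z0 x = ∫ ξ in (0:ℝ)..x, N (w0 ξ))
    (hX0Z0 : ∀ x, X0 (Z0 x) = x) (hZ0X0 : ∀ z, Z0 (X0 z) = z)
    (wt : ℝ → ℝ → Fin n → ℝ)
    (hwt : ∀ t z i, wt t z i = w0 (X0 (z - tlam i * t)) i)
    (X : ℝ → ℝ → ℝ)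
    (hX : ∀ t z, X t z = X0 z + ∫ τ in (0:ℝ)..t,
        (lam ⟨0, by omega⟩ (wt τ z) - tlam ⟨0, by omega⟩ / N (wt τ z)))
    (Z : ℝ → ℝ → ℝ)
    (hXZ : ∀ t, 0 ≤ t → ∀ x, X t (Z t x) = x)
    (hZX : ∀ t, 0 ≤ t → ∀ z, Z t (X t z) = z) :
    ∀ (i : Fin n) (t : ℝ), 0 ≤ t → ∀ x : ℝ,
      X t (Z0 x + tlam i * t) - lam i wbar * t
        = x + (∫ ξ in (Z0 x)..(Z0 x + tlam i * t), (1 / N (w0 (X0 ξ)) - 1 / N wbar))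
          + ∫ τ in (0:ℝ)..t,
              (M (wt τ (Z0 x + tlam i * t)) / N (wt τ (Z0 x + tlam i * t))
                - M wbar / N wbar) := by
  have h0n : (0:ℕ) < n := by omega
  have h1n : (1:ℕ) < n := by omega
  set i0 : Fin n := ⟨0, h0n⟩ with hi0
  set i1 : Fin n := ⟨1, h1n⟩ with hi1
  -- positivity of N everywhere
  have hkey : ∀ w, N w * (lam i1 w - lam i0 w) = tlam i1 - tlam i0 := by
    intro w
    have e0 := hrich w i0
    have e1 := hrich w i1
    nlinarith [e0, e1]
  have hlt01 : ∀ w, lam i0 w < lam i1 w := by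
    intro w
    exact hstrict w (show i0 < i1 from Fin.mk_lt_mk.mpr Nat.zero_lt_one)
  have hNwbar : 0 < N wbar :=
    lt_of_lt_of_le hc (hNbd wbar (subset_convexHull ℝ K hwbarK)).1
  have hdpos : 0 < tlam i1 - tlam i0 := by
    rw [← hkey wbar]
    exact mul_pos hNwbar (sub_pos.2 (hlt01 wbar))
  have Npos : ∀ w, 0 < N w := by
    intro w
    have h := hkey w
    nlinarith [hlt01 w]
  -- basic measurability/bounds
  have hNcont : Continuous N := hN.continuous
  have hNw0 : Measurable fun ξ => N (w0 ξ) := hNcont.measurable.comp hw0m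
  have hNb : ∀ ξ, c ≤ N (w0 ξ) ∧ N (w0 ξ) ≤ C := fun ξ =>
    hNbd _ (subset_convexHull ℝ K (hw0K ξ))
  have hNint : ∀ a b : ℝ, IntervalIntegrable (fun ξ => N (w0 ξ)) volume a b := by
    intro a b
    refine my_intervalIntegrable_of_bounded hNw0 (B := C) (fun ξ => ?_) a b
    have := hNb ξ
    rw [abs_of_pos (Npos _)]
    exact this.2
  have hZ0sub : ∀ a b : ℝ, Z0 b - Z0 a = ∫ ξ in a..b, N (w0 ξ) := by
    intro a b
    rw [hZ0 a, hZ0 b]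
    exact intervalIntegral.integral_interval_sub_left (hNint 0 b) (hNint 0 a)
  have hZ0mono : StrictMono Z0 := by
    intro a b hab
    have hle : ∫ ξ in a..b, c ≤ ∫ ξ in a..b, N (w0 ξ) :=
      intervalIntegral.integral_mono_on hab.le intervalIntegrable_const (hNint a b)
        (fun ξ _ => (hNb ξ).1)
    rw [intervalIntegral.integral_const] at hle
    have h2 := hZ0sub a b
    have : 0 < (b - a) • c := by
      simp only [smul_eq_mul]
      exact mul_pos (sub_pos.2 hab) hc
    linarith
  have hZ0surj : Function.Surjective Z0 := fun z => ⟨X0 z, hZ0X0 z⟩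
  set e : ℝ ≃o ℝ := StrictMono.orderIsoOfSurjective Z0 hZ0mono hZ0surj with he
  have hX0fun : X0 = ⇑e.symm := by
    funext z
    apply e.injective
    rw [OrderIso.apply_symm_apply]
    exact hZ0X0 z
  have hX0cont : Continuous X0 := by rw [hX0fun]; exact OrderIso.continuous e.symm
  have hX0meas : Measurable X0 := hX0cont.measurable
  have hX0emb : MeasurableEmbedding X0 := by
    rw [hX0fun]
    exact e.symm.toHomeomorph.measurableEmbedding
  have hX0lt : ∀ p ξ : ℝ, p < X0 ξ ↔ Z0 p < ξ := by
    intro p ξ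
    rw [← hZ0mono.lt_iff_lt, hZ0X0]
  have hX0le : ∀ ξ q : ℝ, X0 ξ ≤ q ↔ ξ ≤ Z0 q := by
    intro ξ q
    rw [← hZ0mono.le_iff_le, hZ0X0]
  have hX0mono : StrictMono X0 := by
    intro a b h
    rw [hX0lt, hZ0X0]
    exact h
  have hpre : ∀ p q : ℝ, X0 ⁻¹' (Ioc p q) = Ioc (Z0 p) (Z0 q) := by
    intro p q
    ext ξ
    simp only [mem_preimage, mem_Ioc, hX0lt, hX0le]
  -- the pushforward measure identity
  set μ : Measure ℝ := volume.withDensity fun ξ => ((N (w0 ξ)).toNNReal : ℝ≥0∞) with hμ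
  have ρmeas : Measurable fun ξ => (N (w0 ξ)).toNNReal := hNw0.real_toNNReal
  have hmapX0 : Measure.map X0 volume = μ := by
    refine Measure.ext_of_Ioc' _ _ (fun a b hab => ?_) (fun a b hab => ?_)
    · rw [Measure.map_apply hX0meas measurableSet_Ioc, hpre]
      exact measure_Ioc_lt_top.ne
    · rw [Measure.map_apply hX0meas measurableSet_Ioc, hpre, Real.volume_Ioc,
        hμ, withDensity_apply _ measurableSet_Ioc]
      have hZab : Z0 b - Z0 a = ∫ ξ in Ioc a b, N (w0 ξ) := by
        rw [hZ0sub a b, intervalIntegral.integral_of_le hab.le]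
      rw [hZab]
      have hInt : Integrable (fun ξ => N (w0 ξ)) (volume.restrict (Ioc a b)) :=
        ((hNint a b).1 : IntegrableOn _ _ _)
      have := ofReal_integral_eq_lintegral_ofReal hInt
        (ae_of_all _ (fun ξ => (Npos (w0 ξ)).le))
      rw [this]
      rfl
  -- the key substitution identity
  have hInvMeas : Measurable fun y : ℝ => 1 / N (w0 y) := by
    have h := hNw0.inv
    simp only [one_div]
    exact h
  have keyInt : ∀ a b : ℝ, (∫ ξ in a..b, 1 / N (w0 (X0 ξ))) = X0 b - X0 a := by
    have main : ∀ a b : ℝ, a ≤ b → (∫ ξ in a..b, 1 / N (w0 (X0 ξ))) = X0 b - X0 a := by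
      intro a b hab
      have hIm : Ioc a b = X0 ⁻¹' (Ioc (X0 a) (X0 b)) := by
        rw [hpre, hZ0X0, hZ0X0]
      calc (∫ ξ in a..b, 1 / N (w0 (X0 ξ)))
          = ∫ ξ in Ioc a b, 1 / N (w0 (X0 ξ)) := intervalIntegral.integral_of_le hab
        _ = ∫ y, 1 / N (w0 y) ∂(Measure.map X0 (volume.restrict (Ioc a b))) :=
            (hX0emb.integral_map (fun y => 1 / N (w0 y))).symm
        _ = ∫ y, 1 / N (w0 y) ∂(μ.restrict (Ioc (X0 a) (X0 b))) := by
            rw [hIm, ← Measure.restrict_map hX0meas measurableSet_Ioc, hmapX0]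
        _ = ∫ y in Ioc (X0 a) (X0 b), ((N (w0 y)).toNNReal : ℝ≥0) • (1 / N (w0 y)) := by
            rw [hμ, restrict_withDensity measurableSet_Ioc,
              integral_withDensity_eq_integral_smul ρmeas]
        _ = ∫ y in Ioc (X0 a) (X0 b), (1:ℝ) := by
            apply integral_congr_ae
            refine ae_of_all _ (fun y => ?_)
            have h1 : ((N (w0 y)).toNNReal : ℝ) = N (w0 y) :=
              Real.coe_toNNReal _ (Npos _).le
            show (N (w0 y)).toNNReal • (1 / N (w0 y)) = (1:ℝ)
            rw [NNReal.smul_def, smul_eq_mul, h1, mul_one_div]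
            exact div_self (Npos _).ne'
        _ = X0 b - X0 a := by
            rw [setIntegral_const, measureReal_def, Real.volume_Ioc, smul_eq_mul, mul_one,
              ENNReal.toReal_ofReal (sub_nonneg.2 ((hX0mono.le_iff_le).2 hab))]
    intro a b
    rcases le_total a b with hab | hba
    · exact main a b hab
    · rw [intervalIntegral.integral_symm, main b a hba]
      ring
  -- identity lam j w - tlam j / N w = M w / N w
  have hMN : ∀ (j : Fin n) (w : Fin n → ℝ), lam j w - tlam j / N w = M w / N w := by
    intro j w
    rw [← hrich w j]
    field_simp [(Npos w).ne']
  -- compactness bound for the time integrand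
  set K' : Set (Fin n → ℝ) := Set.pi univ (fun j => (fun v => v j) '' K) with hK'
  have hK'c : IsCompact K' := isCompact_univ_pi (fun j => hK.image (continuous_apply j))
  have hwtK : ∀ τ z, wt τ z ∈ K' := by
    intro τ z
    rw [hK', Set.mem_univ_pi]
    intro j
    rw [hwt τ z j]
    exact ⟨w0 (X0 (z - tlam j * τ)), hw0K _, rfl⟩
  set φ : (Fin n → ℝ) → ℝ := fun w => lam i0 w - tlam i0 / N w with hφ
  have hφcont : Continuous φ := by
    exact (hlam i0).continuous.sub (continuous_const.div hNcont (fun w => (Npos w).ne'))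
  obtain ⟨B, hB⟩ := hK'c.exists_bound_of_continuousOn hφcont.continuousOn
  -- proceed on the main goal
  intro i t ht x
  set z : ℝ := Z0 x + tlam i * t with hz
  have hwtmeas : Measurable fun τ => wt τ z := by
    apply measurable_pi_lambda
    intro j
    have : (fun τ => wt τ z j) = fun τ => w0 (X0 (z - tlam j * τ)) j := by
      funext τ; exact hwt τ z j
    rw [this]
    exact (measurable_pi_apply j).comp
      (hw0m.comp (hX0meas.comp ((measurable_id.const_mul (tlam j)).const_sub z)))
  have hφint : IntervalIntegrable (fun τ => φ (wt τ z)) volume 0 t := by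
    refine my_intervalIntegrable_of_bounded (hφcont.measurable.comp hwtmeas) (B := B)
      (fun τ => ?_) 0 t
    simpa [Real.norm_eq_abs] using hB _ (hwtK τ z)
  -- integrability of 1/N(w0(X0 ξ))
  have h1int : IntervalIntegrable (fun ξ => 1 / N (w0 (X0 ξ))) volume (Z0 x) z := by
    refine my_intervalIntegrable_of_bounded (hInvMeas.comp hX0meas) (B := 1/c)
      (fun ξ => ?_) _ _
    simp only [Function.comp_apply]
    rw [abs_of_pos (one_div_pos.2 (Npos _))]
    exact one_div_le_one_div_of_le hc (hNb _).1
  -- compute the first integral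
  have eq1 : (∫ ξ in (Z0 x)..z, (1 / N (w0 (X0 ξ)) - 1 / N wbar))
      = (X0 z - x) - (tlam i * t) * (1 / N wbar) := by
    rw [intervalIntegral.integral_sub h1int intervalIntegrable_const,
      keyInt (Z0 x) z, hX0Z0 x, intervalIntegral.integral_const]
    have hzz : z - Z0 x = tlam i * t := by rw [hz]; ring
    rw [hzz, smul_eq_mul]
  -- compute the second integral
  have eq2 : (∫ τ in (0:ℝ)..t, (M (wt τ z) / N (wt τ z) - M wbar / N wbar))
      = (∫ τ in (0:ℝ)..t, φ (wt τ z)) - t * (M wbar / N wbar) := by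
    have hcongr : EqOn (fun τ => M (wt τ z) / N (wt τ z) - M wbar / N wbar)
        (fun τ => φ (wt τ z) - M wbar / N wbar) (Set.uIcc 0 t) := by
      intro τ _
      show M (wt τ z) / N (wt τ z) - M wbar / N wbar
          = φ (wt τ z) - M wbar / N wbar
      have hphiz : φ (wt τ z) = M (wt τ z) / N (wt τ z) := by
        rw [hφ]; exact hMN i0 (wt τ z)
      rw [hphiz]
    rw [intervalIntegral.integral_congr hcongr,
      intervalIntegral.integral_sub hφint intervalIntegrable_const,
      intervalIntegral.integral_const]
    rw [smul_eq_mul, sub_zero]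
  -- the X-integral is the φ-integral
  have eqX : X t z = X0 z + ∫ τ in (0:ℝ)..t, φ (wt τ z) := hX t z
  -- M wbar / N wbar in terms of index i
  have hMNw : M wbar / N wbar = lam i wbar - tlam i / N wbar := (hMN i wbar).symm
  rw [eqX, eq1, eq2, hMNw]
  have hNwbar' : N wbar ≠ 0 := hNwbar.ne'
  field_simp
  ring
end

section
/- Fix i ∈ {1,…,n} with λ̃_i > 0 and fix k ∈ {1,…,n}, k ≠ i; define f_i(w) = 1/N(w) + λ_k(w̄_1,…,w̄_{i−1}, w_i, w̄_{i+1},…,w̄_n)/(λ̃_i − λ̃_k), and define ψ_i(x) = x + ∫_{Z^0(x)}^{+∞} (1/N(w̃^0(ξ)) − 1/N(w̄)) dξ + (1/(λ̃_i − λ̃_k)) ∫_{Z^0(x)}^{+∞} (λ_k(w̄_1,…,w̄_{i−1}, w̃^0_i(ξ), w̄_{i+1},…,w̄_n) − λ̄_k) dξ. Then ψ_i is a Lipschitz function on ℝ with ψ_i'(x) = 1 − N(w^0(x))·(f_i(w^0(x)) − f_i(w̄)) for a.e. x ∈ ℝ; consequently there exist constants δ_1 > 0 and C_{δ1} > 0,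 depending only on n, c, C, the C^1 norms of N and of the λ_j on the convex hull of K, the constants λ̃_j and w̄, such that if ‖w^0 − w̄‖_{L^∞(ℝ)} < δ_1 then ψ_i'(x) ≥ C_{δ1} for a.e. x ∈ ℝ. -/
open MeasureTheory Filter Set Metric Topology

private lemma stmt5_uIoc_subset_closedBall (x y : ℝ) :
    uIoc x y ⊆ closedBall ((x + y) / 2) (|y - x| / 2) := by
  intro t ht
  rw [Real.closedBall_eq_Icc]
  rcases le_total x y with h | h
  · rw [uIoc_of_le h] at ht
    rw [abs_of_nonneg (sub_nonneg.2 h)]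
    exact ⟨by linarith [ht.1.le], by linarith [ht.2]⟩
  · rw [uIoc_of_ge h] at ht
    rw [abs_of_nonpos (sub_nonpos.2 h)]
    exact ⟨by linarith [ht.1.le], by linarith [ht.2]⟩

/-- Almost-everywhere fundamental theorem of calculus (Lebesgue differentiation). -/
private lemma stmt5_ae_hasDerivAt {f : ℝ → ℝ} (hf : LocallyIntegrable f volume) (a : ℝ) :
    ∀ᵐ x : ℝ, HasDerivAt (fun u => ∫ t in a..u, f t) (f x) x := by
  filter_upwards [IsUnifLocDoublingMeasure.ae_tendsto_average_norm_sub (μ := volume) hf 1]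
    with x hx
  rw [hasDerivAt_iff_tendsto_slope]
  have hδ : Tendsto (fun y : ℝ => |y - x| / 2) (𝓝[≠] x) (𝓝[>] (0:ℝ)) := by
    rw [tendsto_nhdsWithin_iff]
    constructor
    · have : Tendsto (fun y : ℝ => |y - x| / 2) (𝓝 x) (𝓝 (|x - x| / 2)) :=
        (((continuous_id.sub continuous_const).abs).div_const 2).tendsto x
      simpa using this.mono_left nhdsWithin_le_nhds
    · filter_upwards [self_mem_nhdsWithin] with y hy
      have : y - x ≠ 0 := sub_ne_zero.2 hy
      exact mem_Ioi.2 (by positivity)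
  have hmem : ∀ᶠ y in (𝓝[≠] x), x ∈ closedBall ((x + y) / 2) (1 * (|y - x| / 2)) := by
    filter_upwards with y
    rw [mem_closedBall, Real.dist_eq, one_mul]
    rw [abs_le]
    rcases abs_cases (y - x) with ⟨h1, h2⟩ | ⟨h1, h2⟩ <;> constructor <;> linarith
  have htend := hx (fun y : ℝ => (x + y) / 2) (fun y => |y - x| / 2) hδ hmem
  rw [tendsto_iff_norm_sub_tendsto_zero]
  apply squeeze_zero' (Eventually.of_forall fun y => norm_nonneg _) _ htend
  filter_upwards [self_mem_nhdsWithin] with y hy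
  have hyx : y - x ≠ 0 := sub_ne_zero.2 hy
  have hII : ∀ u v : ℝ, IntervalIntegrable f volume u v := fun u v =>
    (hf.integrableOn_isCompact isCompact_uIcc).intervalIntegrable
  have e1 : (∫ t in a..y, f t) - ∫ t in a..x, f t = ∫ t in x..y, f t :=
    intervalIntegral.integral_interval_sub_left (hII a y) (hII a x)
  have e2 : (∫ t in x..y, f t) - (y - x) • f x = ∫ t in x..y, (f t - f x) := by
    rw [intervalIntegral.integral_sub (hII x y) (intervalIntegrable_const),
      intervalIntegral.integral_const]
  have hball : IntegrableOn (fun t => ‖f t - f x‖) (closedBall ((x + y) / 2) (|y - x| / 2)) :=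
    ((hf.sub (locallyIntegrable_const _)).integrableOn_isCompact
      (isCompact_closedBall _ _)).norm
  have e3 : ‖∫ t in x..y, (f t - f x)‖ ≤
      ∫ t in closedBall ((x + y) / 2) (|y - x| / 2), ‖f t - f x‖ := by
    refine (intervalIntegral.norm_integral_le_integral_norm_uIoc).trans ?_
    apply setIntegral_mono_set hball (Eventually.of_forall fun t => norm_nonneg _)
    exact HasSubset.Subset.eventuallyLE (stmt5_uIoc_subset_closedBall x y)
  have e4 : (∫ t in closedBall ((x + y) / 2) (|y - x| / 2), ‖f t - f x‖)
      = |y - x| * ⨍ t in closedBall ((x + y) / 2) (|y - x| / 2), ‖f t - f x‖ := by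
    rw [← measure_smul_setAverage _
      (μ := volume) (measure_closedBall_lt_top (x := (x+y)/2) (r := |y - x| / 2)).ne]
    rw [measureReal_def, Real.volume_closedBall]
    rw [smul_eq_mul, ENNReal.toReal_ofReal (by positivity)]
    congr 1; ring
  calc ‖slope (fun u => ∫ t in a..u, f t) x y - f x‖
      = |y - x|⁻¹ * ‖(∫ t in x..y, f t) - (y - x) • f x‖ := by
        have : slope (fun u => ∫ t in a..u, f t) x y - f x
            = (y - x)⁻¹ * ((∫ t in x..y, f t) - (y - x) • f x) := by
          rw [slope_def_field, ← e1]
          field_simp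
          rw [smul_eq_mul]
        rw [this, norm_mul, norm_inv, Real.norm_eq_abs, Real.norm_eq_abs]
    _ ≤ ⨍ t in closedBall ((x + y) / 2) (|y - x| / 2), ‖f t - f x‖ := by
        rw [e2]
        rw [e4] at e3
        rw [inv_mul_le_iff₀ (by positivity)]
        calc ‖∫ t in x..y, (f t - f x)‖ ≤ _ := e3
          _ ≤ _ := by rw [mul_comm]

private lemma stmt5_integral_Ioi_eq {r : ℝ → ℝ} (hr : Integrable r volume) (z : ℝ) :
    ∫ ξ in Ioi z, r ξ = (∫ ξ in Ioi (0:ℝ), r ξ) - ∫ ξ in (0:ℝ)..z, r ξ := by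
  rcases le_total (0:ℝ) z with h | h
  · rw [intervalIntegral.integral_of_le h]
    have hsplit : ∫ ξ in Ioi (0:ℝ), r ξ
        = (∫ ξ in Ioc (0:ℝ) z, r ξ) + ∫ ξ in Ioi z, r ξ := by
      rw [← setIntegral_union (Ioc_disjoint_Ioi le_rfl) measurableSet_Ioi
        (hr.integrableOn) (hr.integrableOn), Ioc_union_Ioi_eq_Ioi h]
    rw [hsplit]; ring
  · rw [intervalIntegral.integral_symm, intervalIntegral.integral_of_le h]
    have hsplit : ∫ ξ in Ioi z, r ξ
        = (∫ ξ in Ioc z 0, r ξ) + ∫ ξ in Ioi (0:ℝ), r ξ := by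
      rw [← setIntegral_union (Ioc_disjoint_Ioi le_rfl) measurableSet_Ioi
        (hr.integrableOn) (hr.integrableOn), Ioc_union_Ioi_eq_Ioi h]
    rw [hsplit]; ring

theorem stmt_5
    (n : ℕ) (hn : 2 ≤ n)
    (K : Set (Fin n → ℝ)) (hK : IsCompact K)
    (lam : Fin n → (Fin n → ℝ) → ℝ) (hlam : ∀ i, ContDiff ℝ 1 (lam i))
    (N : (Fin n → ℝ) → ℝ) (hN : ContDiff ℝ 1 N)
    (c C : ℝ) (hc : 0 < c) (hcC : c ≤ C)
    (hNbd : ∀ w ∈ convexHull ℝ K, c ≤ N w ∧ N w ≤ C)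
    (M : (Fin n → ℝ) → ℝ) (tlam : Fin n → ℝ)
    (hrich : ∀ (w : Fin n → ℝ) (i : Fin n), N w * lam i w - tlam i = M w)
    (hstrict : ∀ w : Fin n → ℝ, StrictMono (fun i => lam i w))
    (hlindeg : ∀ (i : Fin n) (w v : Fin n → ℝ),
      (∀ j, j ≠ i → w j = v j) → lam i w = lam i v)
    (wbar : Fin n → ℝ) (hwbarK : wbar ∈ K)
    (i k : Fin n) (hi : 0 < tlam i) (hk : k ≠ i)
    (f : (Fin n → ℝ) → ℝ)
    (hf : ∀ v : Fin n → ℝ,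
      f v = 1 / N v + lam k (Function.update wbar i (v i)) / (tlam i - tlam k)) :
    ∃ δ1 > (0:ℝ), ∃ Cδ1 > (0:ℝ),
      ∀ (w0 : ℝ → Fin n → ℝ) (Z0 X0 : ℝ → ℝ) (ψ : ℝ → ℝ),
        Measurable w0 → (∀ x, w0 x ∈ K) →
        Integrable (fun x => w0 x - wbar) →
        (∀ x, Z0 x = ∫ ξ in (0:ℝ)..x, N (w0 ξ)) →
        (∀ x, X0 (Z0 x) = x) → (∀ z, Z0 (X0 z) = z) →
        (∀ x, ψ x = x
          + (∫ ξ in Ioi (Z0 x), (1 / N (w0 (X0 ξ)) - 1 / N wbar))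
          + (tlam i - tlam k)⁻¹ *
              ∫ ξ in Ioi (Z0 x), (lam k (Function.update wbar i (w0 (X0 ξ) i)) - lam k wbar)) →
        (∃ L : NNReal, LipschitzWith L ψ) ∧
        (∀ᵐ x : ℝ, HasDerivAt ψ (1 - N (w0 x) * (f (w0 x) - f wbar)) x) ∧
        (eLpNorm (fun x => w0 x - wbar) ⊤ volume < ENNReal.ofReal δ1 →
          ∀ᵐ x : ℝ, ∃ d, HasDerivAt ψ d x ∧ Cδ1 ≤ d) := by
  classical
  have hKhull : K ⊆ convexHull ℝ K := subset_convexHull ℝ K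
  have hNc : ∀ v ∈ K, c ≤ N v := fun v hv => (hNbd v (hKhull hv)).1
  have hNC : ∀ v ∈ K, N v ≤ C := fun v hv => (hNbd v (hKhull hv)).2
  have hC0 : 0 < C := lt_of_lt_of_le hc hcC
  -- a ball containing K
  obtain ⟨R, hRK⟩ := hK.isBounded.subset_closedBall 0
  have hwbarR : wbar ∈ closedBall (0 : Fin n → ℝ) R := hRK hwbarK
  have hR0 : 0 ≤ R := by
    have := mem_closedBall_zero_iff.1 hwbarR
    exact le_trans (norm_nonneg _) this
  have hupd : ∀ v ∈ closedBall (0 : Fin n → ℝ) R,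
      Function.update wbar i (v i) ∈ closedBall (0 : Fin n → ℝ) R := by
    intro v hv
    rw [mem_closedBall_zero_iff]
    rw [pi_norm_le_iff_of_nonneg hR0]
    intro j
    rcases eq_or_ne j i with h | h
    · subst h
      simp only [Function.update_self]
      exact le_trans (norm_le_pi_norm v j) (mem_closedBall_zero_iff.1 hv)
    · rw [Function.update_of_ne h]
      exact le_trans (norm_le_pi_norm wbar j) (mem_closedBall_zero_iff.1 hwbarR)
  -- Lipschitz constants for `lam k` and `N` on the ball
  have hLipgen : ∀ g : (Fin n → ℝ) → ℝ, ContDiff ℝ 1 g → ∃ L : ℝ, 0 ≤ L ∧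
      ∀ u ∈ closedBall (0 : Fin n → ℝ) R, ∀ v ∈ closedBall (0 : Fin n → ℝ) R,
        ‖g u - g v‖ ≤ L * ‖u - v‖ := by
    intro g hg
    have hcf : Continuous fun x => ‖fderiv ℝ g x‖ := (hg.continuous_fderiv one_ne_zero).norm
    obtain ⟨L, hL⟩ := (isCompact_closedBall (0 : Fin n → ℝ) R).exists_bound_of_continuousOn
      hcf.continuousOn
    refine ⟨max L 0, le_max_right _ _, fun u hu v hv => ?_⟩
    have := Convex.norm_image_sub_le_of_norm_fderiv_le
      (f := g) (C := max L 0) (s := closedBall (0 : Fin n → ℝ) R)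
      (fun x _ => (hg.differentiable one_ne_zero).differentiableAt)
      (fun x hx => le_trans (le_of_abs_le (by simpa using hL x hx)) (le_max_left _ _))
      (convex_closedBall _ _) hv hu
    simpa using this
  obtain ⟨Lk, hLk0, hLk⟩ := hLipgen (lam k) (hlam k)
  obtain ⟨LN, hLN0, hLN⟩ := hLipgen N hN
  -- choose δ1 by continuity
  have hupd_cont : Continuous fun v : Fin n → ℝ => Function.update wbar i (v i) := by
    apply continuous_pi
    intro j
    rcases eq_or_ne j i with h | h
    · subst h
      simp only [Function.update_self]
      exact continuous_apply _
    · simp only [Function.update_of_ne h]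
      exact continuous_const
  have hfK : ContinuousOn f K := by
    have : ContinuousOn (fun v => 1 / N v
        + lam k (Function.update wbar i (v i)) / (tlam i - tlam k)) K := by
      apply ContinuousOn.add
      · exact continuousOn_const.div hN.continuous.continuousOn
          (fun v hv => ne_of_gt (lt_of_lt_of_le hc (hNc v hv)))
      · exact (((hlam k).continuous.comp hupd_cont).continuousOn).div_const _
    exact this.congr fun v _ => hf v
  have hφK : ContinuousOn (fun v => N v * (f v - f wbar)) K :=
    hN.continuous.continuousOn.mul (hfK.sub continuousOn_const)
  have hφw : ContinuousWithinAt (fun v => N v * (f v - f wbar)) K wbar := hφK wbar hwbarK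
  rw [Metric.continuousWithinAt_iff] at hφw
  obtain ⟨δ1, hδ1pos, hδ1⟩ := hφw (1/2) (by norm_num)
  refine ⟨δ1, hδ1pos, 1/2, by norm_num, ?_⟩
  intro w0 Z0 X0 ψ hw0m hw0K hw0L1 hZ0 hXZ hZX hψ
  have hNw0c : ∀ x, c ≤ N (w0 x) := fun x => hNc _ (hw0K x)
  have hNw0C : ∀ x, N (w0 x) ≤ C := fun x => hNC _ (hw0K x)
  have hNw0m : Measurable fun y => N (w0 y) := hN.continuous.measurable.comp hw0m
  have hNloc : LocallyIntegrable (fun y => N (w0 y)) volume := by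
    refine (memLp_top_of_bound hNw0m.aestronglyMeasurable C ?_).locallyIntegrable le_top
    filter_upwards with x
    rw [Real.norm_eq_abs, abs_of_pos (lt_of_lt_of_le hc (hNw0c x))]
    exact hNw0C x
  have hNint : ∀ u v : ℝ, IntervalIntegrable (fun y => N (w0 y)) volume u v := fun u v =>
    (hNloc.integrableOn_isCompact isCompact_uIcc).intervalIntegrable
  have hZdiff : ∀ u v : ℝ, Z0 v - Z0 u = ∫ t in u..v, N (w0 t) := by
    intro u v
    rw [hZ0, hZ0]
    exact intervalIntegral.integral_interval_sub_left (hNint 0 v) (hNint 0 u)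
  have hZlow : ∀ u v : ℝ, u ≤ v → c * (v - u) ≤ Z0 v - Z0 u := by
    intro u v huv
    rw [hZdiff u v]
    have : ∫ t in u..v, c ≤ ∫ t in u..v, N (w0 t) :=
      intervalIntegral.integral_mono_on huv intervalIntegrable_const (hNint u v)
        (fun t _ => hNw0c t)
    simpa [intervalIntegral.integral_const, smul_eq_mul, mul_comm] using this
  have hZup : ∀ u v : ℝ, |Z0 v - Z0 u| ≤ C * |v - u| := by
    intro u v
    rw [hZdiff u v, ← Real.norm_eq_abs]
    exact intervalIntegral.norm_integral_le_of_norm_le_const (fun t _ => by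
      rw [Real.norm_eq_abs, abs_of_pos (lt_of_lt_of_le hc (hNw0c t))]
      exact hNw0C t)
  have hZsm : StrictMono Z0 := by
    intro u v huv
    have := hZlow u v huv.le
    nlinarith
  have hXdist : ∀ a b : ℝ, c * |X0 a - X0 b| ≤ |a - b| := by
    intro a b
    rcases le_total (X0 b) (X0 a) with h | h
    · have := hZlow (X0 b) (X0 a) h
      rw [hZX, hZX] at this
      rw [abs_of_nonneg (sub_nonneg.2 h)]
      calc c * (X0 a - X0 b) ≤ a - b := this
        _ ≤ |a - b| := le_abs_self _
    · have := hZlow (X0 a) (X0 b) h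
      rw [hZX, hZX] at this
      rw [abs_of_nonpos (sub_nonpos.2 h), abs_sub_comm, neg_sub]
      calc c * (X0 b - X0 a) ≤ b - a := this
        _ ≤ |b - a| := le_abs_self _
  have hX0lip : LipschitzWith (c⁻¹).toNNReal X0 := by
    apply LipschitzWith.of_dist_le_mul
    intro a b
    rw [Real.dist_eq, Real.dist_eq, Real.coe_toNNReal _ (inv_nonneg.2 hc.le)]
    rw [inv_mul_eq_div, le_div_iff₀ hc]
    calc |X0 a - X0 b| * c = c * |X0 a - X0 b| := mul_comm _ _
      _ ≤ |a - b| := hXdist a b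
  have hX0cont : Continuous X0 := hX0lip.continuous
  have hX0meas : Measurable X0 := hX0cont.measurable
  have hZ0lip : LipschitzWith C.toNNReal Z0 := by
    apply LipschitzWith.of_dist_le_mul
    intro a b
    rw [Real.dist_eq, Real.dist_eq, Real.coe_toNNReal _ hC0.le]
    simpa [abs_sub_comm] using hZup b a
  have hZ0meas : Measurable Z0 := hZ0lip.continuous.measurable
  -- the pushforward measure
  set μ : Measure ℝ := volume.withDensity fun y => ENNReal.ofReal (N (w0 y)) with hμ
  have hdm : Measurable fun y => ENNReal.ofReal (N (w0 y)) :=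
    ENNReal.measurable_ofReal.comp hNw0m
  have hμIoc : ∀ u v : ℝ, u ≤ v → μ (Ioc u v) = ENNReal.ofReal (Z0 v - Z0 u) := by
    intro u v huv
    rw [hμ, withDensity_apply _ measurableSet_Ioc]
    rw [← ofReal_integral_eq_lintegral_ofReal
      ((hNloc.integrableOn_isCompact isCompact_Icc).mono_set Ioc_subset_Icc_self)
      (Eventually.of_forall fun y => (lt_of_lt_of_le hc (hNw0c y)).le)]
    rw [hZdiff u v, intervalIntegral.integral_of_le huv]
  have hXsm : StrictMono X0 := by
    intro a b hab
    have : Z0 (X0 a) < Z0 (X0 b) := by rw [hZX, hZX]; exact hab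
    exact hZsm.lt_iff_lt.1 this
  have hmap : Measure.map Z0 μ = volume := by
    refine (Measure.ext_of_Ioc volume (Measure.map Z0 μ) fun a b hab => ?_).symm
    rw [Measure.map_apply hZ0meas measurableSet_Ioc]
    have hpre : Z0 ⁻¹' (Ioc a b) = Ioc (X0 a) (X0 b) := by
      ext y
      simp only [mem_preimage, mem_Ioc]
      constructor
      · rintro ⟨h1, h2⟩
        constructor
        · have : Z0 (X0 a) < Z0 y := by rw [hZX]; exact h1
          exact hZsm.lt_iff_lt.1 this
        · have : Z0 y ≤ Z0 (X0 b) := by rw [hZX]; exact h2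
          exact hZsm.le_iff_le.1 this
      · rintro ⟨h1, h2⟩
        constructor
        · have := hZsm h1
          rwa [hZX] at this
        · have := hZsm.monotone h2
          rwa [hZX] at this
    rw [hpre, hμIoc _ _ (hXsm hab).le, hZX, hZX, Real.volume_Ioc]
  -- null sets pull back
  have hnull : ∀ E : Set ℝ, volume E = 0 → volume (Z0 ⁻¹' E) = 0 := by
    intro E hE
    obtain ⟨E', hEE', hE'm, hE'0⟩ := exists_measurable_superset_of_null hE
    have hμE' : μ (Z0 ⁻¹' E') = 0 := by
      have : μ (Z0 ⁻¹' E') = Measure.map Z0 μ E' := (Measure.map_apply hZ0meas hE'm).symm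
      rw [this, hmap, hE'0]
    have hle : ENNReal.ofReal c * volume (Z0 ⁻¹' E') ≤ μ (Z0 ⁻¹' E') := by
      have hm' : MeasurableSet (Z0 ⁻¹' E') := hZ0meas hE'm
      rw [hμ, withDensity_apply _ hm']
      calc ENNReal.ofReal c * volume (Z0 ⁻¹' E')
          = ∫⁻ _ in Z0 ⁻¹' E', ENNReal.ofReal c := (setLIntegral_const _ _).symm
        _ ≤ ∫⁻ y in Z0 ⁻¹' E', ENNReal.ofReal (N (w0 y)) :=
            lintegral_mono fun y => ENNReal.ofReal_le_ofReal (hNw0c y)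
    rw [hμE'] at hle
    have h0 : volume (Z0 ⁻¹' E') = 0 := by
      have hprod : ENNReal.ofReal c * volume (Z0 ⁻¹' E') = 0 := le_antisymm hle (by positivity)
      rcases mul_eq_zero.1 hprod with h | h
      · exact absurd h (by simp [ENNReal.ofReal_eq_zero, not_le, hc])
      · exact h
    exact measure_mono_null (preimage_mono hEE') h0
  -- integrability transfer
  have hcomp : ∀ p : ℝ → ℝ, Measurable p → Integrable p volume →
      Integrable (fun ξ => p (X0 ξ)) volume := by
    intro p hpm hpint
    refine ⟨(hpm.comp hX0meas).aestronglyMeasurable, ?_⟩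
    rw [hasFiniteIntegral_iff_norm]
    have hmeasnorm : Measurable fun ξ => ENNReal.ofReal ‖p (X0 ξ)‖ :=
      ENNReal.measurable_ofReal.comp ((hpm.comp hX0meas).norm)
    have e1 : ∫⁻ ξ, ENNReal.ofReal ‖p (X0 ξ)‖ ∂volume
        = ∫⁻ y, ENNReal.ofReal ‖p (X0 (Z0 y))‖ ∂μ := by
      conv_lhs => rw [← hmap]
      rw [lintegral_map hmeasnorm hZ0meas]
    have e2 : ∫⁻ y, ENNReal.ofReal ‖p (X0 (Z0 y))‖ ∂μ = ∫⁻ y, ENNReal.ofReal ‖p y‖ ∂μ := by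
      congr 1
      ext y
      rw [hXZ]
    have hgm : Measurable fun y : ℝ => ENNReal.ofReal ‖p y‖ :=
      ENNReal.measurable_ofReal.comp hpm.norm
    have e3 : ∫⁻ y, ENNReal.ofReal ‖p y‖ ∂μ
        = ∫⁻ y, (ENNReal.ofReal (N (w0 y)) * ENNReal.ofReal ‖p y‖) ∂volume := by
      rw [hμ, lintegral_withDensity_eq_lintegral_mul _ hdm hgm]
      rfl
    have e4 : ∫⁻ y, (ENNReal.ofReal (N (w0 y)) * ENNReal.ofReal ‖p y‖) ∂volume
        ≤ ENNReal.ofReal C * ∫⁻ y, ENNReal.ofReal ‖p y‖ ∂volume := by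
      rw [← lintegral_const_mul _ hgm]
      exact lintegral_mono fun y =>
        mul_le_mul_left (ENNReal.ofReal_le_ofReal (hNw0C y)) _
    rw [e1, e2, e3]
    refine lt_of_le_of_lt e4 ?_
    have := hpint.2
    rw [hasFiniteIntegral_iff_norm] at this
    exact ENNReal.mul_lt_top ENNReal.ofReal_lt_top this
  -- the two integrands
  set p1 : ℝ → ℝ := fun y => 1 / N (w0 y) - 1 / N wbar with hp1def
  set p2 : ℝ → ℝ := fun y => lam k (Function.update wbar i (w0 y i)) - lam k wbar with hp2def
  have hp1m : Measurable p1 :=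
    (measurable_const.div hNw0m).sub measurable_const
  have hp2m : Measurable p2 :=
    (((hlam k).continuous.comp hupd_cont).measurable.comp hw0m).sub measurable_const
  have hupdmem : ∀ x, Function.update wbar i (w0 x i) ∈ closedBall (0 : Fin n → ℝ) R :=
    fun x => hupd _ (hRK (hw0K x))
  have hupdsub : ∀ v : Fin n → ℝ,
      ‖Function.update wbar i (v i) - wbar‖ ≤ ‖v - wbar‖ := by
    intro v
    have h1 : ‖Function.update wbar i (v i) - wbar‖ ≤ |v i - wbar i| := by
      rw [pi_norm_le_iff_of_nonneg (abs_nonneg _)]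
      intro j
      rcases eq_or_ne j i with h | h
      · subst h
        simp [Function.update_self]
      · simp [Function.update_of_ne h]
    refine h1.trans ?_
    have := norm_le_pi_norm (v - wbar) i
    simpa using this
  have hp1b : ∀ y, |1 / N (w0 y) - 1 / N wbar| ≤ (LN / (c * c)) * ‖w0 y - wbar‖ := by
    intro y
    have hNv : c ≤ N (w0 y) := hNw0c y
    have hNw : c ≤ N wbar := hNc _ hwbarK
    have hNv0 : N (w0 y) ≠ 0 := ne_of_gt (lt_of_lt_of_le hc hNv)
    have hNw0' : N wbar ≠ 0 := ne_of_gt (lt_of_lt_of_le hc hNw)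
    have heq : 1 / N (w0 y) - 1 / N wbar = (N wbar - N (w0 y)) / (N (w0 y) * N wbar) := by
      field_simp
    rw [heq, abs_div]
    have hnum : |N wbar - N (w0 y)| ≤ LN * ‖w0 y - wbar‖ := by
      have := hLN wbar hwbarR (w0 y) (hRK (hw0K y))
      rwa [Real.norm_eq_abs, norm_sub_rev] at this
    have hden : c * c ≤ |N (w0 y) * N wbar| := by
      rw [abs_of_pos (mul_pos (lt_of_lt_of_le hc hNv) (lt_of_lt_of_le hc hNw))]
      exact mul_le_mul hNv hNw hc.le (lt_of_lt_of_le hc hNv).le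
    calc |N wbar - N (w0 y)| / |N (w0 y) * N wbar|
        ≤ (LN * ‖w0 y - wbar‖) / (c * c) :=
          div_le_div₀ (mul_nonneg hLN0 (norm_nonneg _)) hnum (by positivity) hden
      _ = (LN / (c * c)) * ‖w0 y - wbar‖ := by ring
  have hp2b : ∀ y, |lam k (Function.update wbar i (w0 y i)) - lam k wbar|
      ≤ Lk * ‖w0 y - wbar‖ := by
    intro y
    have h1 := hLk _ (hupdmem y) wbar hwbarR
    rw [Real.norm_eq_abs] at h1
    refine h1.trans ?_
    exact mul_le_mul_of_nonneg_left (hupdsub (w0 y)) hLk0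
  have hp1int : Integrable (fun y => 1 / N (w0 y) - 1 / N wbar) volume := by
    refine Integrable.mono' ((hw0L1.norm).const_mul (LN / (c * c)))
      hp1m.aestronglyMeasurable ?_
    filter_upwards with y
    rw [Real.norm_eq_abs]
    exact hp1b y
  have hp2int : Integrable (fun y => lam k (Function.update wbar i (w0 y i)) - lam k wbar)
      volume := by
    refine Integrable.mono' ((hw0L1.norm).const_mul Lk) hp2m.aestronglyMeasurable ?_
    filter_upwards with y
    rw [Real.norm_eq_abs]
    exact hp2b y
  have hq1int : Integrable (fun ξ => 1 / N (w0 (X0 ξ)) - 1 / N wbar) volume :=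
    hcomp _ hp1m hp1int
  have hq2int : Integrable
      (fun ξ => lam k (Function.update wbar i (w0 (X0 ξ) i)) - lam k wbar) volume :=
    hcomp _ hp2m hp2int
  -- rewrite ψ using primitives
  have hψ2 : ∀ x, ψ x = x
      + ((∫ ξ in Ioi (0:ℝ), (1 / N (w0 (X0 ξ)) - 1 / N wbar))
        + (tlam i - tlam k)⁻¹ *
          ∫ ξ in Ioi (0:ℝ), (lam k (Function.update wbar i (w0 (X0 ξ) i)) - lam k wbar))
      - ((∫ t in (0:ℝ)..(Z0 x), (1 / N (w0 (X0 t)) - 1 / N wbar))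
        + (tlam i - tlam k)⁻¹ *
          ∫ t in (0:ℝ)..(Z0 x), (lam k (Function.update wbar i (w0 (X0 t) i)) - lam k wbar)) := by
    intro x
    rw [hψ x, stmt5_integral_Ioi_eq hq1int (Z0 x), stmt5_integral_Ioi_eq hq2int (Z0 x)]
    ring
  -- a.e. differentiability of the primitives at `Z0 x`
  have hder1 := stmt5_ae_hasDerivAt hq1int.locallyIntegrable 0
  have hder2 := stmt5_ae_hasDerivAt hq2int.locallyIntegrable 0
  have hP1 : ∀ᵐ x : ℝ, HasDerivAt
      (fun u => ∫ t in (0:ℝ)..u, (1 / N (w0 (X0 t)) - 1 / N wbar))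
      (1 / N (w0 (X0 (Z0 x))) - 1 / N wbar) (Z0 x) := by
    rw [ae_iff]
    exact measure_mono_null (fun x hx => hx) (hnull _ (ae_iff.1 hder1))
  have hP2 : ∀ᵐ x : ℝ, HasDerivAt
      (fun u => ∫ t in (0:ℝ)..u,
        (lam k (Function.update wbar i (w0 (X0 t) i)) - lam k wbar))
      (lam k (Function.update wbar i (w0 (X0 (Z0 x)) i)) - lam k wbar) (Z0 x) := by
    rw [ae_iff]
    exact measure_mono_null (fun x hx => hx) (hnull _ (ae_iff.1 hder2))
  have hZfun : Z0 = fun u => ∫ t in (0:ℝ)..u, N (w0 t) := funext hZ0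
  have hZder : ∀ᵐ x : ℝ, HasDerivAt Z0 (N (w0 x)) x := by
    have := stmt5_ae_hasDerivAt hNloc 0
    filter_upwards [this] with x hx
    rw [hZfun]
    exact hx
  -- the a.e. derivative of ψ
  have hder : ∀ᵐ x : ℝ, HasDerivAt ψ (1 - N (w0 x) * (f (w0 x) - f wbar)) x := by
    filter_upwards [hP1, hP2, hZder] with x h1 h2 hz
    rw [hXZ x] at h1 h2
    have hc1 : HasDerivAt
        (fun u => ∫ t in (0:ℝ)..(Z0 u), (1 / N (w0 (X0 t)) - 1 / N wbar))
        ((1 / N (w0 x) - 1 / N wbar) * N (w0 x)) x := h1.comp x hz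
    have hc2 : HasDerivAt
        (fun u => ∫ t in (0:ℝ)..(Z0 u),
          (lam k (Function.update wbar i (w0 (X0 t) i)) - lam k wbar))
        ((lam k (Function.update wbar i (w0 x i)) - lam k wbar) * N (w0 x)) x := h2.comp x hz
    have hD := (((hasDerivAt_id x).add_const
        ((∫ ξ in Ioi (0:ℝ), (1 / N (w0 (X0 ξ)) - 1 / N wbar))
        + (tlam i - tlam k)⁻¹ *
          ∫ ξ in Ioi (0:ℝ), (lam k (Function.update wbar i (w0 (X0 ξ) i)) - lam k wbar))).sub
        (hc1.add (hc2.const_mul (tlam i - tlam k)⁻¹)))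
    have hψfun : ψ = fun x => x
        + ((∫ ξ in Ioi (0:ℝ), (1 / N (w0 (X0 ξ)) - 1 / N wbar))
          + (tlam i - tlam k)⁻¹ *
            ∫ ξ in Ioi (0:ℝ), (lam k (Function.update wbar i (w0 (X0 ξ) i)) - lam k wbar))
        - ((∫ t in (0:ℝ)..(Z0 x), (1 / N (w0 (X0 t)) - 1 / N wbar))
          + (tlam i - tlam k)⁻¹ *
            ∫ t in (0:ℝ)..(Z0 x),
              (lam k (Function.update wbar i (w0 (X0 t) i)) - lam k wbar)) := funext hψ2
    rw [hψfun]
    refine hD.congr_deriv ?_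
    rw [hf (w0 x), hf wbar, Function.update_eq_self]
    ring
  refine ⟨?_, hder, ?_⟩
  · -- Lipschitz
    have hq1bd : ∀ ξ : ℝ, |1 / N (w0 (X0 ξ)) - 1 / N wbar| ≤ 2 / c := by
      intro ξ
      have hcc : (0:ℝ) < N (w0 (X0 ξ)) := lt_of_lt_of_le hc (hNw0c (X0 ξ))
      have hcw : (0:ℝ) < N wbar := lt_of_lt_of_le hc (hNc _ hwbarK)
      have h1 : |1 / N (w0 (X0 ξ))| ≤ 1 / c := by
        rw [abs_of_pos (one_div_pos.2 hcc)]
        exact one_div_le_one_div_of_le hc (hNw0c (X0 ξ))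
      have h2 : |1 / N wbar| ≤ 1 / c := by
        rw [abs_of_pos (one_div_pos.2 hcw)]
        exact one_div_le_one_div_of_le hc (hNc _ hwbarK)
      calc |1 / N (w0 (X0 ξ)) - 1 / N wbar| ≤ |1 / N (w0 (X0 ξ))| + |1 / N wbar| :=
            abs_sub _ _
        _ ≤ 1 / c + 1 / c := add_le_add h1 h2
        _ = 2 / c := by ring
    have hq2bd : ∀ ξ : ℝ,
        |lam k (Function.update wbar i (w0 (X0 ξ) i)) - lam k wbar| ≤ Lk * (2 * R) := by
      intro ξ
      refine (hp2b (X0 ξ)).trans ?_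
      refine mul_le_mul_of_nonneg_left ?_ hLk0
      calc ‖w0 (X0 ξ) - wbar‖ ≤ ‖w0 (X0 ξ)‖ + ‖wbar‖ := norm_sub_le _ _
        _ ≤ R + R := add_le_add (mem_closedBall_zero_iff.1 (hRK (hw0K (X0 ξ))))
            (mem_closedBall_zero_iff.1 hwbarR)
        _ = 2 * R := by ring
    have hMq0 : 0 ≤ 2 / c + |(tlam i - tlam k)⁻¹| * (Lk * (2 * R)) := by
      have h1 : (0:ℝ) ≤ 2 / c := by positivity
      have h2 : (0:ℝ) ≤ |(tlam i - tlam k)⁻¹| * (Lk * (2 * R)) :=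
        mul_nonneg (abs_nonneg _) (mul_nonneg hLk0 (by linarith))
      linarith
    have key : ∀ x y : ℝ, |ψ x - ψ y|
        ≤ (1 + (2 / c + |(tlam i - tlam k)⁻¹| * (Lk * (2 * R))) * C) * |x - y| := by
      intro x y
      have d1 : (∫ t in (0:ℝ)..(Z0 x), (1 / N (w0 (X0 t)) - 1 / N wbar))
          - (∫ t in (0:ℝ)..(Z0 y), (1 / N (w0 (X0 t)) - 1 / N wbar))
          = ∫ t in (Z0 y)..(Z0 x), (1 / N (w0 (X0 t)) - 1 / N wbar) :=
        intervalIntegral.integral_interval_sub_left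
          (hq1int.intervalIntegrable) (hq1int.intervalIntegrable)
      have d2 : (∫ t in (0:ℝ)..(Z0 x),
            (lam k (Function.update wbar i (w0 (X0 t) i)) - lam k wbar))
          - (∫ t in (0:ℝ)..(Z0 y),
            (lam k (Function.update wbar i (w0 (X0 t) i)) - lam k wbar))
          = ∫ t in (Z0 y)..(Z0 x),
            (lam k (Function.update wbar i (w0 (X0 t) i)) - lam k wbar) :=
        intervalIntegral.integral_interval_sub_left
          (hq2int.intervalIntegrable) (hq2int.intervalIntegrable)
      have b1 : |∫ t in (Z0 y)..(Z0 x), (1 / N (w0 (X0 t)) - 1 / N wbar)|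
          ≤ (2 / c) * |Z0 x - Z0 y| := by
        rw [← Real.norm_eq_abs]
        exact intervalIntegral.norm_integral_le_of_norm_le_const fun t _ => by
          rw [Real.norm_eq_abs]; exact hq1bd t
      have b2 : |∫ t in (Z0 y)..(Z0 x),
            (lam k (Function.update wbar i (w0 (X0 t) i)) - lam k wbar)|
          ≤ (Lk * (2 * R)) * |Z0 x - Z0 y| := by
        rw [← Real.norm_eq_abs]
        exact intervalIntegral.norm_integral_le_of_norm_le_const fun t _ => by
          rw [Real.norm_eq_abs]; exact hq2bd t
      have bz : |Z0 x - Z0 y| ≤ C * |x - y| := hZup y x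
      have hsplit : ψ x - ψ y = (x - y)
          - ((∫ t in (Z0 y)..(Z0 x), (1 / N (w0 (X0 t)) - 1 / N wbar))
            + (tlam i - tlam k)⁻¹ *
              ∫ t in (Z0 y)..(Z0 x),
                (lam k (Function.update wbar i (w0 (X0 t) i)) - lam k wbar)) := by
        rw [hψ2 x, hψ2 y, ← d1, ← d2]
        ring
      have habs : |ψ x - ψ y| ≤ |x - y|
          + (|∫ t in (Z0 y)..(Z0 x), (1 / N (w0 (X0 t)) - 1 / N wbar)|
            + |(tlam i - tlam k)⁻¹| *
              |∫ t in (Z0 y)..(Z0 x),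
                (lam k (Function.update wbar i (w0 (X0 t) i)) - lam k wbar)|) := by
        rw [hsplit]
        refine (abs_sub _ _).trans ?_
        gcongr
        refine (abs_add_le _ _).trans ?_
        rw [abs_mul]
      calc |ψ x - ψ y| ≤ |x - y|
            + ((2 / c) * |Z0 x - Z0 y|
              + |(tlam i - tlam k)⁻¹| * ((Lk * (2 * R)) * |Z0 x - Z0 y|)) := by
            refine habs.trans ?_
            gcongr
        _ = |x - y| + (2 / c + |(tlam i - tlam k)⁻¹| * (Lk * (2 * R))) * |Z0 x - Z0 y| := by
            ring
        _ ≤ |x - y| + (2 / c + |(tlam i - tlam k)⁻¹| * (Lk * (2 * R))) * (C * |x - y|) := by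
            exact add_le_add_right (mul_le_mul_of_nonneg_left bz hMq0) _
        _ = (1 + (2 / c + |(tlam i - tlam k)⁻¹| * (Lk * (2 * R))) * C) * |x - y| := by ring
    refine ⟨(1 + (2 / c + |(tlam i - tlam k)⁻¹| * (Lk * (2 * R))) * C).toNNReal,
      LipschitzWith.of_dist_le_mul fun x y => ?_⟩
    rw [Real.dist_eq, Real.dist_eq, Real.coe_toNNReal _
      (by nlinarith [hMq0, hC0.le] : (0:ℝ) ≤ 1 + (2 / c + |(tlam i - tlam k)⁻¹| * (Lk * (2 * R))) * C)]
    exact key x y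
  · -- lower bound on the derivative
    intro hlt
    have hae : ∀ᵐ x : ℝ, ‖w0 x - wbar‖ < δ1 := by
      have h1 := ae_le_eLpNormEssSup (f := fun x => w0 x - wbar) (μ := volume)
      rw [eLpNorm_exponent_top] at hlt
      filter_upwards [h1] with x hx
      have h2 : (‖w0 x - wbar‖₊ : ENNReal) < ENNReal.ofReal δ1 := lt_of_le_of_lt hx hlt
      rw [← enorm_eq_nnnorm, ← ofReal_norm] at h2
      exact (ENNReal.ofReal_lt_ofReal_iff hδ1pos).1 h2
    filter_upwards [hder, hae] with x hd hb
    refine ⟨_, hd, ?_⟩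
    have hdist : dist (w0 x) wbar < δ1 := by rwa [dist_eq_norm]
    have h3 := hδ1 (hw0K x) hdist
    rw [Real.dist_eq] at h3
    have hz : N wbar * (f wbar - f wbar) = 0 := by ring
    rw [hz, sub_zero] at h3
    have h4 := abs_lt.1 h3
    linarith [h4.1, h4.2]
end

section
/- Let f̄ ∈ ℝ and let f : ℝ → ℝ be measurable with f − f̄ ∈ L^1(ℝ). Let γ > 0 and let (e_ν)_{ν>0} be a family of Lipschitz functions e_ν : ℝ → ℝ such that e_ν'(x) ≥ γ for a.e. x ∈ ℝ and every ν > 0, and such that e_ν(x) → x as ν → 0, pointwise on ℝ and uniformly on every compact subset of ℝ. Then for every ν > 0 the function x ↦ f(x) − f(e_ν(x)) belongs to L^1(ℝ), and ∫_ℝ |f(x) − f(e_ν(x))| dx → 0 as ν → 0. -/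
open MeasureTheory Filter Set Topology

lemma expand_of_ae_deriv {γ : ℝ} (hγ : 0 < γ) {E : ℝ → ℝ} {L : NNReal} (hL : LipschitzWith L E)
    (hd : ∀ᵐ x : ℝ, ∃ d, HasDerivAt E d x ∧ γ ≤ d) :
    ∀ a b : ℝ, a ≤ b → γ * (b - a) ≤ E b - E a := by
  intro a b hab
  have hEc : Continuous E := hL.continuous
  have key : ∀ ε : ℝ, 0 < ε → γ * (b - a) ≤ E b - E a + (γ + L + (b - a)) * ε := by
    intro ε hε
    set A : Set ℝ := {x | ∃ d, HasDerivAt E d x ∧ γ ≤ d} with hA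
    have hAc : volume Aᶜ = 0 := hd
    obtain ⟨U, hUA, hUopen, hUvol⟩ :=
      Set.exists_isOpen_lt_of_lt Aᶜ (ENNReal.ofReal ε) (by rw [hAc]; exact ENNReal.ofReal_pos.mpr hε)
    have hUfin : volume U ≠ ⊤ := (hUvol.trans ENNReal.ofReal_lt_top).ne
    set m : ℝ → ℝ := fun t => (volume (U ∩ Ioc a t)).toReal with hm
    have m_fin : ∀ t, volume (U ∩ Ioc a t) ≠ ⊤ := fun t =>
      ((measure_mono inter_subset_left).trans_lt hUfin.lt_top).ne
    have m_mono : Monotone m := by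
      intro s t hst
      exact ENNReal.toReal_le_toReal (m_fin s) (m_fin t) |>.mpr
        (measure_mono (inter_subset_inter_right _ (Ioc_subset_Ioc_right hst)))
    have m_add : ∀ t u, a ≤ t → t ≤ u → m u - m t = (volume (U ∩ Ioc t u)).toReal := by
      intro t u hat htu
      have hdisj : Disjoint (U ∩ Ioc a t) (U ∩ Ioc t u) := by
        refine Disjoint.mono inter_subset_right inter_subset_right ?_
        exact Ioc_disjoint_Ioc_of_le le_rfl
      have hsplit : U ∩ Ioc a u = (U ∩ Ioc a t) ∪ (U ∩ Ioc t u) := by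
        rw [← inter_union_distrib_left, Ioc_union_Ioc_eq_Ioc hat htu]
      have : volume (U ∩ Ioc a u) = volume (U ∩ Ioc a t) + volume (U ∩ Ioc t u) := by
        rw [hsplit, measure_union hdisj (hUopen.measurableSet.inter measurableSet_Ioc)]
      simp only [hm, this, ENNReal.toReal_add (m_fin t)
        (((measure_mono inter_subset_left).trans_lt hUfin.lt_top).ne)]
      ring
    have m_lip : ∀ t u, t ≤ u → m u ≤ m t + (u - t) := by
      intro t u htu
      have hsub : U ∩ Ioc a u ⊆ (U ∩ Ioc a t) ∪ Ioc t u := by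
        rintro x ⟨hxU, hax, hxu⟩
        by_cases hxt : x ≤ t
        · exact Or.inl ⟨hxU, hax, hxt⟩
        · exact Or.inr ⟨lt_of_not_ge hxt, hxu⟩
      have h1 : volume (U ∩ Ioc a u) ≤ volume (U ∩ Ioc a t) + ENNReal.ofReal (u - t) := by
        calc volume (U ∩ Ioc a u) ≤ volume ((U ∩ Ioc a t) ∪ Ioc t u) := measure_mono hsub
        _ ≤ volume (U ∩ Ioc a t) + volume (Ioc t u) := measure_union_le _ _
        _ = volume (U ∩ Ioc a t) + ENNReal.ofReal (u - t) := by rw [Real.volume_Ioc]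
      have h2 := ENNReal.toReal_le_toReal (m_fin u)
        (ENNReal.add_ne_top.mpr ⟨m_fin t, ENNReal.ofReal_ne_top⟩) |>.mpr h1
      rwa [ENNReal.toReal_add (m_fin t) ENNReal.ofReal_ne_top,
        ENNReal.toReal_ofReal (by linarith)] at h2
    have m_cont : Continuous m := by
      refine LipschitzWith.continuous (K := 1) (LipschitzWith.of_dist_le_mul fun s t => ?_)
      rw [Real.dist_eq, Real.dist_eq]
      simp only [NNReal.coe_one, one_mul]
      rcases le_total s t with h | h
      · have := m_lip s t h
        have := m_mono h
        rw [abs_sub_comm (m s), abs_sub_comm s, abs_of_nonneg (by linarith : (0:ℝ) ≤ m t - m s),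
          abs_of_nonneg (by linarith : (0:ℝ) ≤ t - s)]
        linarith
      · have := m_lip t s h
        have := m_mono h
        rw [abs_of_nonneg (by linarith : (0:ℝ) ≤ m s - m t),
          abs_of_nonneg (by linarith : (0:ℝ) ≤ s - t)]
        linarith
    set S : Set ℝ := {t | γ * (t - a) ≤ E t - E a + ((γ + L) * m t + ε * (t - a))} with hS
    have hSclosed : IsClosed S := by
      apply isClosed_le
      · fun_prop
      · fun_prop
    have haS : a ∈ S := by
      have : m a = 0 := by simp [hm]
      simp [hS, this]
    have main : Icc a b ⊆ S := by
      refine (hSclosed.inter isClosed_Icc).Icc_subset_of_forall_exists_gt haS ?_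
      rintro t ⟨htS, hta, htb⟩ v hv
      have step : ∀ u, t < u →
          γ * (u - t) ≤ E u - E t + ((γ + L) * (m u - m t) + ε * (u - t)) → u ∈ S := by
        intro u htu hineq
        simp only [hS, mem_setOf_eq] at htS ⊢
        nlinarith [htS, hineq]
      by_cases htU : t ∈ U
      · obtain ⟨δ, hδ, hball⟩ := Metric.isOpen_iff.1 hUopen t htU
        refine ⟨min v (t + δ / 2), ?_, lt_min hv (by linarith), min_le_left _ _⟩
        · set u := min v (t + δ / 2) with hu
          have htu : t < u := lt_min hv (by linarith)
          have hud : u ≤ t + δ / 2 := min_le_right _ _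
          have hsub : Ioc t u ⊆ U := by
            intro x hx
            apply hball
            rw [Real.ball_eq_Ioo]
            exact ⟨by linarith [hx.1], by linarith [hx.2]⟩
          have hmu : m u - m t = u - t := by
            rw [m_add t u hta htu.le, inter_eq_self_of_subset_right hsub, Real.volume_Ioc,
              ENNReal.toReal_ofReal (by linarith)]
          have hE : -(L * (u - t)) ≤ E u - E t := by
            have := hL.dist_le_mul u t
            rw [Real.dist_eq, Real.dist_eq] at this
            have h1 : |E u - E t| ≤ L * (u - t) := by
              rw [abs_of_nonneg (show (0:ℝ) ≤ u - t by linarith)] at this; exact this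
            linarith [neg_abs_le (E u - E t)]
          apply step _ htu
          rw [hmu]
          nlinarith
      · have htA : t ∈ A := by
          by_contra hcon
          exact htU (hUA hcon)
        obtain ⟨d, hdAt, hγd⟩ := htA
        have hs : Tendsto (slope E t) (𝓝[>] t) (𝓝 d) :=
          (hasDerivAt_iff_tendsto_slope.1 hdAt).mono_left
            (nhdsWithin_mono t fun x hx => ne_of_gt hx)
        have hev : ∀ᶠ u in 𝓝[>] t, d - ε < slope E t u :=
          hs.eventually (eventually_gt_nhds (by linarith))
        have hmem : Ioc t v ∈ 𝓝[>] t := Ioc_mem_nhdsGT hv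
        obtain ⟨u, hu1, hu2⟩ := (hev.and (eventually_of_mem hmem fun x hx => hx)).exists
        refine ⟨u, ?_, hu2⟩
        · have htu : t < u := hu2.1
          have hslope : E u - E t ≥ (d - ε) * (u - t) := by
            have h1 : (d - ε) * (u - t) ≤ slope E t u * (u - t) :=
              mul_le_mul_of_nonneg_right hu1.le (by linarith [hu2.1])
            rwa [slope_def_field, div_mul_cancel₀ _ (by linarith [hu2.1] : u - t ≠ 0)] at h1
          apply step _ htu
          have hmm : 0 ≤ m u - m t := by linarith [m_mono htu.le]
          have hLn : (0:ℝ) ≤ (γ + L) := add_nonneg hγ.le L.coe_nonneg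
          calc γ * (u - t) = (γ - ε) * (u - t) + ε * (u - t) := by ring
          _ ≤ (d - ε) * (u - t) + ε * (u - t) := by nlinarith
          _ ≤ (E u - E t) + ((γ + L) * (m u - m t) + ε * (u - t)) := by nlinarith
    have hbS : b ∈ S := main (right_mem_Icc.2 hab)
    have hmb : m b ≤ ε := by
      have h1 : m b ≤ (volume U).toReal :=
        ENNReal.toReal_le_toReal (m_fin b) hUfin |>.mpr (measure_mono inter_subset_left)
      have h2 : (volume U).toReal ≤ ε := ENNReal.toReal_le_of_le_ofReal hε.le hUvol.le
      linarith
    simp only [hS, mem_setOf_eq] at hbS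
    have hLn : (0:ℝ) ≤ γ + L := add_nonneg hγ.le L.coe_nonneg
    nlinarith [mul_le_mul_of_nonneg_left hmb hLn]
  refine le_of_forall_pos_le_add fun ε hε => ?_
  have hC : 0 < γ + L + (b - a) := by have := L.coe_nonneg; linarith
  have := key (ε / (γ + L + (b - a))) (div_pos hε hC)
  rwa [mul_div_cancel₀ _ hC.ne'] at this

lemma map_vol_le {γ : ℝ} (hγ : 0 < γ) {E : ℝ → ℝ} (hEc : Continuous E)
    (hexp : ∀ a b : ℝ, a ≤ b → γ * (b - a) ≤ E b - E a) :
    Measure.map E volume ≤ (ENNReal.ofReal γ⁻¹) • volume := by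
  have sm : StrictMono E := fun x y hxy => by nlinarith [hexp x y hxy.le]
  have htop : Tendsto E atTop atTop := by
    have hlow : (fun x => E 0 + γ * x) ≤ᶠ[atTop] E := by
      filter_upwards [eventually_ge_atTop (0:ℝ)] with x hx
      have := hexp 0 x hx
      show E 0 + γ * x ≤ E x
      linarith
    exact tendsto_atTop_mono' atTop hlow
      (tendsto_atTop_add_const_left _ _ (Tendsto.const_mul_atTop hγ tendsto_id))
  have hbot : Tendsto E atBot atBot := by
    have hlow : E ≤ᶠ[atBot] (fun x => E 0 + γ * x) := by
      filter_upwards [eventually_le_atBot (0:ℝ)] with x hx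
      have := hexp x 0 hx
      show E x ≤ E 0 + γ * x
      linarith
    exact tendsto_atBot_mono' atBot hlow
      (tendsto_atBot_add_const_left _ _ (Tendsto.const_mul_atBot hγ tendsto_id))
  have surj : Function.Surjective E := hEc.surjective htop hbot
  let o : ℝ ≃o ℝ := StrictMono.orderIsoOfSurjective E sm surj
  set F : ℝ → ℝ := fun y => o.symm y with hF
  have hoE : ∀ x, o x = E x := fun x => rfl
  have hEF : ∀ y, E (F y) = y := fun y => o.apply_symm_apply y
  have hFE : ∀ x, F (E x) = x := fun x => o.symm_apply_apply x
  have hFmono : Monotone F := o.symm.monotone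
  have hFcont : Continuous F := (OrderIso.toHomeomorph o.symm).continuous
  have hFlip : ∀ s t : ℝ, s ≤ t → F t - F s ≤ γ⁻¹ * (t - s) := by
    intro s t hst
    have h1 := hexp (F s) (F t) (hFmono hst)
    rw [hEF, hEF] at h1
    rw [inv_mul_eq_div, le_div_iff₀ hγ]
    linarith
  have key1 : ∀ s x : ℝ, s < E x ↔ F s < x := by
    intro s x
    constructor
    · intro h
      have := o.symm.strictMono h
      rwa [show o.symm (E x) = x from hFE x] at this
    · intro h
      have := sm h
      rwa [hEF] at this
  have key2 : ∀ t x : ℝ, E x ≤ t ↔ x ≤ F t := by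
    intro t x
    constructor
    · intro h
      have := hFmono h
      rwa [show F (E x) = x from hFE x] at this
    · intro h
      have := sm.monotone h
      rwa [hEF] at this
  have hpre : ∀ s t : ℝ, E ⁻¹' Ioc s t = Ioc (F s) (F t) := by
    intro s t
    ext x
    simp only [mem_preimage, mem_Ioc, key1, key2]
  have hξmono : Monotone (fun x => γ⁻¹ * x - F x) := by
    intro s t hst
    have := hFlip s t hst
    simp only
    nlinarith
  let ξ : StieltjesFunction ℝ :=
    ⟨fun x => γ⁻¹ * x - F x, hξmono, fun x =>
      ((continuous_const.mul continuous_id).sub hFcont).continuousWithinAt⟩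
  have hmapIoc : ∀ s t : ℝ, Measure.map E volume (Ioc s t) = ENNReal.ofReal (F t - F s) := by
    intro s t
    rw [Measure.map_apply hEc.measurable measurableSet_Ioc, hpre, Real.volume_Ioc]
  have hsum : Measure.map E volume + ξ.measure = (ENNReal.ofReal γ⁻¹) • volume := by
    refine Measure.ext_of_Ioc' _ _ (fun s t hst => ?_) (fun s t hst => ?_)
    · rw [Measure.add_apply, hmapIoc, ξ.measure_Ioc]
      exact ENNReal.add_ne_top.mpr ⟨ENNReal.ofReal_ne_top, ENNReal.ofReal_ne_top⟩
    · rw [Measure.add_apply, hmapIoc, ξ.measure_Ioc]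
      have hFst : 0 ≤ F t - F s := sub_nonneg.2 (hFmono hst.le)
      have hξst : 0 ≤ (γ⁻¹ * t - F t) - (γ⁻¹ * s - F s) := sub_nonneg.2 (hξmono hst.le)
      have hξval : ξ t - ξ s = (γ⁻¹ * t - F t) - (γ⁻¹ * s - F s) := rfl
      rw [hξval, ← ENNReal.ofReal_add hFst hξst, Measure.smul_apply, Real.volume_Ioc,
        smul_eq_mul, ← ENNReal.ofReal_mul (by positivity)]
      congr 1
      ring
  calc Measure.map E volume ≤ Measure.map E volume + ξ.measure := Measure.le_add_right le_rfl
  _ = _ := hsum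

lemma comp_int {γ : ℝ} (hγ : 0 < γ) {E : ℝ → ℝ} (hEc : Continuous E)
    (hmap : Measure.map E volume ≤ (ENNReal.ofReal γ⁻¹) • volume)
    {φ : ℝ → ℝ} (hφm : Measurable φ) (hφ : Integrable φ) :
    Integrable (fun x => φ (E x)) ∧
      ∫ x : ℝ, |φ (E x)| ≤ γ⁻¹ * ∫ x : ℝ, |φ x| := by
  have hmeas : Measurable fun x => φ (E x) := hφm.comp hEc.measurable
  have hlin : ∫⁻ x, ‖φ (E x)‖₊ ≤ ENNReal.ofReal γ⁻¹ * ∫⁻ x, ‖φ x‖₊ := by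
    have h1 : ∫⁻ x, ‖φ (E x)‖₊ = ∫⁻ y, ‖φ y‖₊ ∂(Measure.map E volume) :=
      (lintegral_map (hφm.nnnorm.coe_nnreal_ennreal) hEc.measurable).symm
    rw [h1]
    calc ∫⁻ y, ‖φ y‖₊ ∂(Measure.map E volume)
        ≤ ∫⁻ y, ‖φ y‖₊ ∂((ENNReal.ofReal γ⁻¹) • volume) := lintegral_mono' hmap le_rfl
      _ = ENNReal.ofReal γ⁻¹ * ∫⁻ y, ‖φ y‖₊ := lintegral_smul_measure _ _
  have hfin : (∫⁻ x, ‖φ x‖₊) < ⊤ := hφ.2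
  have hint : Integrable (fun x => φ (E x)) := by
    refine ⟨hmeas.aestronglyMeasurable, ?_⟩
    exact hlin.trans_lt (ENNReal.mul_lt_top ENNReal.ofReal_lt_top hfin)
  refine ⟨hint, ?_⟩
  have e1 : ∫ x : ℝ, |φ (E x)| = (∫⁻ x, ‖φ (E x)‖₊).toReal := by
    simp only [← Real.norm_eq_abs]
    exact integral_norm_eq_lintegral_enorm hmeas.aestronglyMeasurable
  have e2 : ∫ x : ℝ, |φ x| = (∫⁻ x, ‖φ x‖₊).toReal := by
    simp only [← Real.norm_eq_abs]
    exact integral_norm_eq_lintegral_enorm hφ.1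
  rw [e1, e2]
  calc (∫⁻ x, ‖φ (E x)‖₊).toReal
      ≤ (ENNReal.ofReal γ⁻¹ * ∫⁻ x, ‖φ x‖₊).toReal := by
        apply ENNReal.toReal_le_toReal hint.2.ne ?_ |>.mpr hlin
        exact (ENNReal.mul_lt_top ENNReal.ofReal_lt_top hfin).ne
    _ = γ⁻¹ * (∫⁻ x, ‖φ x‖₊).toReal := by
        rw [ENNReal.toReal_mul, ENNReal.toReal_ofReal (by positivity)]

theorem stmt_7 (fbar : ℝ) (f : ℝ → ℝ) (hfm : Measurable f)
    (hf : Integrable (fun x => f x - fbar))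
    (γ : ℝ) (hγ : 0 < γ)
    (e : ℝ → ℝ → ℝ)
    (hLip : ∀ ν : ℝ, 0 < ν → ∃ L : NNReal, LipschitzWith L (e ν))
    (hderiv : ∀ ν : ℝ, 0 < ν → ∀ᵐ x : ℝ, ∃ d, HasDerivAt (e ν) d x ∧ γ ≤ d)
    (hptws : ∀ x : ℝ, Tendsto (fun ν => e ν x) (nhdsWithin 0 (Ioi 0)) (nhds x))
    (hunif : ∀ s : Set ℝ, IsCompact s →
      TendstoUniformlyOn (fun ν x => e ν x) id (nhdsWithin 0 (Ioi 0)) s) :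
    (∀ ν : ℝ, 0 < ν → Integrable (fun x => f x - f (e ν x))) ∧
    Tendsto (fun ν => ∫ x : ℝ, |f x - f (e ν x)|) (nhdsWithin 0 (Ioi 0)) (nhds 0) := by
  set g : ℝ → ℝ := fun x => f x - fbar with hg_def
  have hgm : Measurable g := hfm.sub measurable_const
  have hg : Integrable g := hf
  have hcontν : ∀ ν : ℝ, 0 < ν → Continuous (e ν) := fun ν hν =>
    ((hLip ν hν).choose_spec).continuous
  have hexpν : ∀ ν : ℝ, 0 < ν → ∀ a b : ℝ, a ≤ b → γ * (b - a) ≤ e ν b - e ν a := by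
    intro ν hν
    obtain ⟨L, hL⟩ := hLip ν hν
    exact expand_of_ae_deriv hγ hL (hderiv ν hν)
  have hcompν : ∀ ν : ℝ, 0 < ν → ∀ φ : ℝ → ℝ, Measurable φ → Integrable φ →
      Integrable (fun x => φ (e ν x)) ∧ ∫ x : ℝ, |φ (e ν x)| ≤ γ⁻¹ * ∫ x : ℝ, |φ x| :=
    fun ν hν φ hφm hφ =>
      comp_int hγ (hcontν ν hν) (map_vol_le hγ (hcontν ν hν) (hexpν ν hν)) hφm hφ
  have hdiff : ∀ (ν : ℝ) (x : ℝ), f x - f (e ν x) = g x - g (e ν x) := by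
    intro ν x; simp [hg_def]
  have part1 : ∀ ν : ℝ, 0 < ν → Integrable (fun x => f x - f (e ν x)) := by
    intro ν hν
    have h1 := (hcompν ν hν g hgm hg).1
    have h2 : (fun x => f x - f (e ν x)) = fun x => g x - g (e ν x) := funext (hdiff ν)
    rw [h2]
    exact hg.sub h1
  refine ⟨part1, ?_⟩
  have hrw : (fun ν => ∫ x : ℝ, |f x - f (e ν x)|) = fun ν => ∫ x : ℝ, |g x - g (e ν x)| := by
    funext ν
    congr 1
    funext x
    rw [hdiff]
  rw [hrw, Metric.tendsto_nhds]
  intro ε hε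
  set c : ℝ := γ⁻¹ with hc
  have hc0 : 0 < c := by positivity
  set δ : ℝ := ε / (2 * (2 + c)) with hδdef
  have hδ : 0 < δ := by positivity
  obtain ⟨h, hhsupp, hhδ, hhcont, hhint⟩ := hg.exists_hasCompactSupport_integral_sub_le hδ
  obtain ⟨r, hr⟩ := hhsupp.isBounded.subset_closedBall 0
  set R : ℝ := max r 1 with hR
  have hRpos : (0:ℝ) < R := lt_of_lt_of_le one_pos (le_max_right _ _)
  have hsupp : ∀ x : ℝ, x ∉ Icc (-R) R → h x = 0 := by
    intro x hx
    apply image_eq_zero_of_notMem_tsupport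
    intro hmem
    have h1 := hr hmem
    rw [Real.closedBall_eq_Icc] at h1
    have hrR : r ≤ R := le_max_left _ _
    exact hx ⟨by linarith [h1.1], by linarith [h1.2]⟩
  set K : Set ℝ := Icc (-(R+2)) (R+2) with hK
  obtain ⟨M, hM⟩ := hhsupp.exists_bound_of_continuous hhcont
  have hM0 : 0 ≤ M := le_trans (norm_nonneg _) (hM 0)
  have hKunif := (Metric.tendstoUniformlyOn_iff.1 (hunif K isCompact_Icc)) 1 one_pos
  have mid : Tendsto (fun ν => ∫ x : ℝ, |h x - h (e ν x)|)
      (nhdsWithin 0 (Ioi 0)) (nhds 0) := by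
    have h0 : (nhds (0:ℝ)) = nhds (∫ (_ : ℝ), (0:ℝ)) := by simp
    rw [h0]
    refine tendsto_integral_filter_of_dominated_convergence (K.indicator fun _ => 2 * M)
      ?_ ?_ ?_ ?_
    · filter_upwards [self_mem_nhdsWithin] with ν hν
      exact ((hhcont.sub (hhcont.comp (hcontν ν hν))).abs).measurable.aestronglyMeasurable
    · filter_upwards [hKunif, self_mem_nhdsWithin] with ν hKν hν
      refine Eventually.of_forall fun x => ?_
      rw [Real.norm_eq_abs, abs_abs]
      by_cases hxK : x ∈ K
      · rw [indicator_of_mem hxK]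
        have h1 : |h x| ≤ M := by rw [← Real.norm_eq_abs]; exact hM x
        have h2 : |h (e ν x)| ≤ M := by rw [← Real.norm_eq_abs]; exact hM _
        calc |h x - h (e ν x)| ≤ |h x| + |h (e ν x)| := abs_sub _ _
          _ ≤ 2 * M := by linarith
      · have hx' : x < -(R+2) ∨ R+2 < x := by
          by_contra hcon
          push_neg at hcon
          exact hxK ⟨hcon.1, hcon.2⟩
        have hx0 : h x = 0 := by
          apply hsupp
          intro hmem
          rcases hx' with h' | h'
          · linarith [hmem.1]
          · linarith [hmem.2]
        have he0 : h (e ν x) = 0 := by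
          apply hsupp
          intro hmem
          rcases hx' with h' | h'
          · have hK2 : (-(R+2) : ℝ) ∈ K := ⟨le_refl _, by linarith⟩
            have hd2 := hKν (-(R+2)) hK2
            simp only [id_eq, Real.dist_eq] at hd2
            have hd3 := abs_lt.1 hd2
            have hexp := hexpν ν hν x (-(R+2)) h'.le
            have hnn : 0 ≤ γ * (-(R+2) - x) := mul_nonneg hγ.le (by linarith)
            have := hmem.1
            linarith [hd3.1, hd3.2]
          · have hK2 : (R+2 : ℝ) ∈ K := ⟨by linarith, le_refl _⟩
            have hd2 := hKν (R+2) hK2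
            simp only [id_eq, Real.dist_eq] at hd2
            have hd3 := abs_lt.1 hd2
            have hexp := hexpν ν hν (R+2) x h'.le
            have hnn : 0 ≤ γ * (x - (R+2)) := mul_nonneg hγ.le (by linarith)
            have := hmem.2
            linarith [hd3.1, hd3.2]
        rw [indicator_of_notMem hxK, hx0, he0]
        simp
    · rw [integrable_indicator_iff measurableSet_Icc]
      exact integrableOn_const measure_Icc_lt_top.ne
    · refine Eventually.of_forall fun x => ?_
      have h1 : Tendsto (fun ν => h (e ν x)) (nhdsWithin 0 (Ioi 0)) (nhds (h x)) :=
        (hhcont.tendsto x).comp (hptws x)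
      have h2 : Tendsto (fun ν => h x - h (e ν x)) (nhdsWithin 0 (Ioi 0))
          (nhds (h x - h x)) := tendsto_const_nhds.sub h1
      have h3 := h2.abs
      simpa using h3
  have midev : ∀ᶠ ν in nhdsWithin (0:ℝ) (Ioi 0), ∫ x : ℝ, |h x - h (e ν x)| < δ := by
    filter_upwards [Metric.tendsto_nhds.1 mid δ hδ] with ν hν
    rw [Real.dist_eq, sub_zero] at hν
    exact lt_of_le_of_lt (le_abs_self _) hν
  filter_upwards [self_mem_nhdsWithin, midev] with ν hν hmid
  rw [Real.dist_eq, sub_zero]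
  have hgE := (hcompν ν hν g hgm hg).1
  have hhE := (hcompν ν hν h hhcont.measurable hhint).1
  have hghm : Measurable (fun x => g x - h x) := hgm.sub hhcont.measurable
  have hghint : Integrable (fun x => g x - h x) := hg.sub hhint
  obtain ⟨hghE, hghbound⟩ := hcompν ν hν _ hghm hghint
  have hgh1 : ∫ x : ℝ, |g x - h x| ≤ δ := by
    simpa [Real.norm_eq_abs] using hhδ
  have tri : ∫ x : ℝ, |g x - g (e ν x)| ≤
      (∫ x : ℝ, |g x - h x|) + (∫ x : ℝ, |h x - h (e ν x)|) +
        ∫ x : ℝ, |g (e ν x) - h (e ν x)| := by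
    have hint1 : Integrable (fun x : ℝ => |g x - h x|) := hghint.abs
    have hint2 : Integrable (fun x : ℝ => |h x - h (e ν x)|) := (hhint.sub hhE).abs
    have hint3 : Integrable (fun x : ℝ => |g (e ν x) - h (e ν x)|) := hghE.abs
    have hintL : Integrable (fun x : ℝ => |g x - g (e ν x)|) := (hg.sub hgE).abs
    have hpt : ∀ x : ℝ, |g x - g (e ν x)| ≤
        |g x - h x| + |h x - h (e ν x)| + |g (e ν x) - h (e ν x)| := by
      intro x
      have hre : g x - g (e ν x) =
          (g x - h x) + (h x - h (e ν x)) + (h (e ν x) - g (e ν x)) := by ring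
      rw [hre]
      calc |(g x - h x) + (h x - h (e ν x)) + (h (e ν x) - g (e ν x))|
          ≤ |(g x - h x) + (h x - h (e ν x))| + |h (e ν x) - g (e ν x)| := abs_add_le _ _
        _ ≤ |g x - h x| + |h x - h (e ν x)| + |h (e ν x) - g (e ν x)| := by
            linarith [abs_add_le (g x - h x) (h x - h (e ν x))]
        _ = |g x - h x| + |h x - h (e ν x)| + |g (e ν x) - h (e ν x)| := by
            rw [abs_sub_comm (h (e ν x))]
    calc ∫ x : ℝ, |g x - g (e ν x)|
        ≤ ∫ x : ℝ, (|g x - h x| + |h x - h (e ν x)| + |g (e ν x) - h (e ν x)|) :=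
          integral_mono hintL ((hint1.add hint2).add hint3) hpt
      _ = _ := by
          have e1 : ∫ x : ℝ, (|g x - h x| + |h x - h (e ν x)| + |g (e ν x) - h (e ν x)|) =
              (∫ x : ℝ, (|g x - h x| + |h x - h (e ν x)|)) +
                ∫ x : ℝ, |g (e ν x) - h (e ν x)| :=
            integral_add (hint1.add hint2) hint3
          have e2 : ∫ x : ℝ, (|g x - h x| + |h x - h (e ν x)|) =
              (∫ x : ℝ, |g x - h x|) + ∫ x : ℝ, |h x - h (e ν x)| :=
            integral_add hint1 hint2
          rw [e1, e2]
  have habs : 0 ≤ ∫ x : ℝ, |g x - g (e ν x)| := integral_nonneg fun x => abs_nonneg _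
  rw [abs_of_nonneg habs]
  have hthird : ∫ x : ℝ, |g (e ν x) - h (e ν x)| ≤ c * δ := by
    calc ∫ x : ℝ, |g (e ν x) - h (e ν x)| ≤ c * ∫ x : ℝ, |g x - h x| := hghbound
      _ ≤ c * δ := mul_le_mul_of_nonneg_left hgh1 hc0.le
  have hkey : (2 + c) * δ = ε / 2 := by
    rw [hδdef]
    field_simp
  linarith
end

section
/- Let f : ℝ → ℝ be locally absolutely continuous with derivative f' ∈ L^1(ℝ). Let γ_1 > 0 and γ_2 ≥ 0 be constants and let h : ℝ → ℝ be a Lipschitz function with h'(x) ≥ γ_1 for a.e. x ∈ ℝ and |h(x) − x| ≤ γ_2 for all x ∈ ℝ. Then f − f∘h ∈ L^1(ℝ) and ∫_ℝ |f(x) − f(h(x))| dx ≤ (γ_2 / min{1, γ_1}) · ‖f'‖_{L^1(ℝ)}. -/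
open MeasureTheory Filter Set
open scoped Topology ENNReal NNReal Interval

lemma growth_of_ae_deriv {γ1 : ℝ} (hγ1 : 0 < γ1) {h : ℝ → ℝ} {L : NNReal}
    (hLip : LipschitzWith L h)
    (hder : ∀ᵐ x : ℝ, ∃ d, HasDerivAt h d x ∧ γ1 ≤ d) :
    ∀ a b : ℝ, a ≤ b → γ1 * (b - a) ≤ h b - h a := by
  intro a b hab
  set K : ℝ := (L : ℝ) + γ1 with hK
  have hKpos : 0 < K := add_pos_of_nonneg_of_pos L.coe_nonneg hγ1
  have hE : volume {x : ℝ | ¬ ∃ d, HasDerivAt h d x ∧ γ1 ≤ d} = 0 := hder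
  suffices H : ∀ ε > (0:ℝ), ∀ δ > (0:ℝ),
      γ1 * (b - a) - (h b - h a) ≤ K * δ + ε * (b - a) by
    by_contra hc
    push_neg at hc
    set P := γ1 * (b - a) - (h b - h a) with hP
    have hPpos : 0 < P := by simp only [hP]; linarith
    have := H (P / (4 * (b - a + 1))) (by apply div_pos hPpos; linarith) (P / (4 * K)) (by positivity)
    have h1 : K * (P / (4 * K)) = P / 4 := by field_simp
    have h2 : P / (4 * (b - a + 1)) * (b - a) ≤ P / 4 := by
      rw [div_mul_eq_mul_div, div_le_div_iff₀ (by linarith) (by norm_num)]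
      nlinarith
    linarith
  intro ε hε δ hδ
  obtain ⟨U, hEU, hUopen, hUvol⟩ :=
    Set.exists_isOpen_lt_of_lt _ (ENNReal.ofReal δ)
      (by rw [hE]; exact ENNReal.ofReal_pos.mpr hδ)
  have hUfin : ∀ s : Set ℝ, volume (U ∩ s) ≠ ⊤ :=
    fun s => ((lt_of_le_of_lt (measure_mono inter_subset_left) hUvol).trans
      ENNReal.ofReal_lt_top).ne
  set m : ℝ → ℝ := fun x => (volume (U ∩ Ioc a x)).toReal with hm
  have hm_nonneg : ∀ x, 0 ≤ m x := fun x => ENNReal.toReal_nonneg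
  have hm_mono : Monotone m := fun x y hxy =>
    ENNReal.toReal_mono (hUfin _)
      (measure_mono (inter_subset_inter_right _ (Ioc_subset_Ioc_right hxy)))
  have hm_lip : ∀ x y : ℝ, x ≤ y → m y ≤ m x + (y - x) := by
    intro x y hxy
    have hsub : U ∩ Ioc a y ⊆ (U ∩ Ioc a x) ∪ Ioc x y := by
      rintro t ⟨htU, hta, hty⟩
      rcases le_or_gt t x with hc | hc
      · exact mem_union_left _ ⟨htU, mem_Ioc.mpr ⟨hta, hc⟩⟩
      · exact mem_union_right _ (mem_Ioc.mpr ⟨hc, hty⟩)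
    have := (measure_mono hsub).trans (measure_union_le (μ := volume) _ _)
    have h2 := ENNReal.toReal_mono
      (by rw [Real.volume_Ioc]; exact (ENNReal.add_ne_top).2 ⟨hUfin _, ENNReal.ofReal_ne_top⟩) this
    rw [ENNReal.toReal_add (hUfin _) (by rw [Real.volume_Ioc]; exact ENNReal.ofReal_ne_top),
      Real.volume_Ioc, ENNReal.toReal_ofReal (by linarith)] at h2
    exact h2
  have hm_cont : Continuous m := by
    rw [Metric.continuous_iff]
    intro x η hη
    refine ⟨η, hη, fun y hy => ?_⟩
    rw [Real.dist_eq] at hy ⊢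
    obtain ⟨hy1, hy2⟩ := abs_sub_lt_iff.mp hy
    rw [abs_sub_lt_iff]
    rcases le_total x y with hc | hc
    · have := hm_lip x y hc
      have := hm_mono hc
      constructor <;> linarith
    · have := hm_lip y x hc
      have := hm_mono hc
      constructor <;> linarith
  have hm_a : m a = 0 := by simp [hm]
  have hm_add : ∀ x z : ℝ, a ≤ x → x ≤ z → Ioc x z ⊆ U → m z = m x + (z - x) := by
    intro x z hax hxz hsub
    have hun : Ioc a z = Ioc a x ∪ Ioc x z := (Ioc_union_Ioc_eq_Ioc hax hxz).symm
    have : U ∩ Ioc a z = (U ∩ Ioc a x) ∪ Ioc x z := by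
      rw [hun, inter_union_distrib_left, inter_eq_right.mpr hsub]
    rw [hm]
    simp only
    rw [this, measure_union _ measurableSet_Ioc, ENNReal.toReal_add (hUfin _)
      (by rw [Real.volume_Ioc]; exact ENNReal.ofReal_ne_top), Real.volume_Ioc,
      ENNReal.toReal_ofReal (by linarith)]
    · exact Set.disjoint_of_subset_left inter_subset_right (Ioc_disjoint_Ioc_of_le le_rfl)
  -- fencing
  set F : ℝ → ℝ := fun x => h a - h x + γ1 * (x - a) - K * m x with hF
  have hfence : ∀ ⦃x⦄, x ∈ Icc a b → F x ≤ ε * (x - a) := by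
    apply image_le_of_liminf_slope_right_lt_deriv_boundary'
      (f := F) (f' := fun _ => 0) (B := fun x => ε * (x - a)) (B' := fun _ => ε)
    · exact (((continuous_const.sub hLip.continuous).add
        (continuous_const.mul (continuous_id.sub continuous_const))).sub
        (continuous_const.mul hm_cont)).continuousOn
    · intro x hx r hr
      have hr' : (0:ℝ) < r := hr
      apply Filter.Eventually.frequently
      have hxz : ∀ᶠ z in 𝓝[>] x, x < z := self_mem_nhdsWithin
      by_cases hxU : x ∈ U
      · obtain ⟨η, hηpos, hball⟩ := Metric.isOpen_iff.mp hUopen x hxU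
        have hev : ∀ᶠ z in 𝓝[>] x, z ∈ Ioo x (x + η) :=
          Ioo_mem_nhdsGT_of_mem ⟨le_rfl, by linarith⟩
        filter_upwards [hev] with z hz
        have hzx : 0 < z - x := sub_pos.mpr hz.1
        have hsub : Ioc x z ⊆ U := by
          intro t ht
          apply hball
          rw [Metric.mem_ball, Real.dist_eq, abs_of_pos (sub_pos.mpr ht.1)]
          linarith [ht.2, hz.2]
        have hmz : m z = m x + (z - x) := hm_add x z hx.1 hz.1.le hsub
        have hhz : -((L:ℝ) * (z - x)) ≤ h z - h x := by
          have hd := hLip.dist_le_mul z x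
          rw [Real.dist_eq, Real.dist_eq, abs_of_pos hzx] at hd
          have hna := neg_abs_le (h z - h x)
          linarith
        have hFz : F z - F x = -(h z - h x) - (L:ℝ) * (z - x) := by
          simp only [hF, hmz, hK]; ring
        rw [slope_def_field, div_lt_iff₀ hzx]
        have hle : F z - F x ≤ 0 := by rw [hFz]; linarith
        exact lt_of_le_of_lt hle (mul_pos hr' hzx)
      · have hxE : (x ∈ {x : ℝ | ¬ ∃ d, HasDerivAt h d x ∧ γ1 ≤ d}) → False :=
          fun hc => hxU (hEU hc)
        obtain ⟨d, hd, hdγ⟩ := not_not.mp hxE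
        have hslope : Tendsto (slope h x) (𝓝[>] x) (𝓝 d) :=
          ((hasDerivAt_iff_tendsto_slope).mp hd).mono_left
            (nhdsWithin_mono x (fun z hz => ne_of_gt hz))
        have hev : ∀ᶠ z in 𝓝[>] x, γ1 - r < slope h x z :=
          hslope.eventually (eventually_gt_nhds (by linarith))
        filter_upwards [hev, hxz] with z hz hzx'
        have hzx : 0 < z - x := sub_pos.mpr hzx'
        rw [slope_def_field] at hz
        have hz' : (γ1 - r) * (z - x) < h z - h x := (lt_div_iff₀ hzx).mp hz
        have hmge : m x ≤ m z := hm_mono hzx'.le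
        have hFz : F z - F x = -(h z - h x) + γ1 * (z - x) - K * (m z - m x) := by
          simp only [hF]; ring
        rw [slope_def_field, div_lt_iff₀ hzx, hFz]
        nlinarith [mul_nonneg hKpos.le (sub_nonneg.mpr hmge), hz']
    · simp [hF, hm_a]
    · exact (continuous_const.mul (continuous_id.sub continuous_const)).continuousOn
    · intro x _
      simpa using ((hasDerivWithinAt_id x (Ici x)).sub_const a).const_mul ε
    · intro x _ _
      exact hε
  have hb := hfence (right_mem_Icc.mpr hab)
  have hmb : m b ≤ δ := ENNReal.toReal_le_of_le_ofReal hδ.le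
    ((measure_mono inter_subset_left).trans hUvol.le)
  simp only [hF] at hb
  nlinarith [mul_le_mul_of_nonneg_left hmb hKpos.le]

theorem stmt_9 (f g : ℝ → ℝ) (hg : Integrable g)
    (hfg : ∀ x y : ℝ, f y - f x = ∫ t in x..y, g t)
    (γ1 γ2 : ℝ) (hγ1 : 0 < γ1) (hγ2 : 0 ≤ γ2)
    (h : ℝ → ℝ) (L : NNReal) (hLip : LipschitzWith L h)
    (hder : ∀ᵐ x : ℝ, ∃ d, HasDerivAt h d x ∧ γ1 ≤ d)
    (hdist : ∀ x : ℝ, |h x - x| ≤ γ2) :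
    Integrable (fun x => f x - f (h x)) ∧
    (∫ x : ℝ, |f x - f (h x)|) ≤ (γ2 / min 1 γ1) * ∫ t : ℝ, |g t| := by
  have hfc : Continuous f := by
    have hf' : f = fun x => (∫ t in (0:ℝ)..x, g t) + f 0 := by
      funext x; have := hfg 0 x; linarith
    rw [hf']
    exact (intervalIntegral.continuous_primitive
      (fun a b => hg.intervalIntegrable) 0).add continuous_const
  have hhc : Continuous h := hLip.continuous
  have key := growth_of_ae_deriv hγ1 hLip hder
  have hmono : StrictMono h := by
    intro x y hxy
    have := key x y hxy.le
    nlinarith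
  have hsurj : Function.Surjective h := by
    apply hhc.surjective
    · apply tendsto_atTop_mono (fun x => ?_)
        (tendsto_atTop_add_const_right atTop (-γ2) tendsto_id)
      have := (abs_le.mp (hdist x)).1
      simp only [id]
      linarith
    · apply tendsto_atBot_mono (fun x => ?_)
        (tendsto_atBot_add_const_right atBot γ2 tendsto_id)
      have := (abs_le.mp (hdist x)).2
      simp only [id]
      linarith
  set A : ℝ → Set ℝ := fun t => {x | t ∈ Ι (h x) x} with hA
  have hAmeas : ∀ t, MeasurableSet (A t) := by
    intro t
    exact (measurableSet_lt ((hhc.min continuous_id).measurable) measurable_const).inter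
      (measurableSet_le measurable_const ((hhc.max continuous_id).measurable))
  have hAvol : ∀ t, volume (A t) ≤ ENNReal.ofReal γ2 := by
    intro t
    obtain ⟨x0, hx0⟩ := hsurj t
    have hsub : A t ⊆ uIcc t x0 := by
      intro x hx
      obtain ⟨h1, h2⟩ := (Set.mem_Ioc.mp hx)
      rw [Set.mem_uIcc]
      rcases le_total x x0 with hc | hc
      · have hhx : h x ≤ t := hx0 ▸ hmono.monotone hc
        rcases le_sup_iff.mp h2 with hth | htx
        · have hxx0 : x = x0 := hmono.injective ((le_antisymm hhx hth).trans hx0.symm)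
          subst hxx0
          rcases le_total t x with hd | hd
          · exact Or.inl ⟨hd, le_rfl⟩
          · exact Or.inr ⟨le_rfl, hd⟩
        · exact Or.inl ⟨htx, hc⟩
      · have hhx : t ≤ h x := hx0 ▸ hmono.monotone hc
        rcases inf_lt_iff.mp h1 with hth | htx
        · exact absurd hhx (not_le.mpr hth)
        · exact Or.inr ⟨hc, htx.le⟩
    calc volume (A t) ≤ volume (uIcc t x0) := measure_mono hsub
      _ = ENNReal.ofReal |x0 - t| := Real.volume_interval
      _ ≤ ENNReal.ofReal γ2 := by
          apply ENNReal.ofReal_le_ofReal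
          rw [← hx0, abs_sub_comm]
          exact hdist x0
  set N : ℝ → ℝ≥0∞ := fun t => (‖g t‖₊ : ℝ≥0∞) with hN
  set S : Set (ℝ × ℝ) := {p | p.2 ∈ Ι (h p.1) p.1} with hS
  have hSmeas : MeasurableSet S :=
    (measurableSet_lt (((hhc.comp continuous_fst).min continuous_fst).measurable)
        measurable_snd).inter
      (measurableSet_le measurable_snd
        (((hhc.comp continuous_fst).max continuous_fst).measurable))
  have hind : ∀ x t, S.indicator (fun p => N p.2) (x, t) = (Ι (h x) x).indicator N t := by
    intro x t
    by_cases hmem : t ∈ Ι (h x) x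
    · rw [Set.indicator_of_mem hmem, Set.indicator_of_mem (show (x,t) ∈ S from hmem)]
    · rw [Set.indicator_of_notMem hmem, Set.indicator_of_notMem (show (x,t) ∉ S from hmem)]
  have hptwise : ∀ x, (ENNReal.ofReal |f x - f (h x)|) ≤ ∫⁻ t, (Ι (h x) x).indicator N t := by
    intro x
    have h1 : f x - f (h x) = ∫ t in (h x)..x, g t := hfg (h x) x
    have h2 : |f x - f (h x)| ≤ ∫ t in Ι (h x) x, |g t| := by
      rw [h1]
      have := intervalIntegral.norm_integral_le_integral_norm_uIoc
        (f := g) (a := h x) (b := x) (μ := volume)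
      simpa [Real.norm_eq_abs] using this
    have h3 : ENNReal.ofReal (∫ t in Ι (h x) x, |g t|) = ∫⁻ t in Ι (h x) x, N t := by
      have : ENNReal.ofReal (∫ t in Ι (h x) x, ‖g t‖) = ∫⁻ t in Ι (h x) x, N t :=
        MeasureTheory.ofReal_integral_norm_eq_lintegral_enorm
        (hg.integrableOn (s := Ι (h x) x))
      simpa [Real.norm_eq_abs] using this
    calc ENNReal.ofReal |f x - f (h x)|
        ≤ ENNReal.ofReal (∫ t in Ι (h x) x, |g t|) := ENNReal.ofReal_le_ofReal h2
      _ = ∫⁻ t in Ι (h x) x, N t := h3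
      _ = ∫⁻ t, (Ι (h x) x).indicator N t := (lintegral_indicator measurableSet_uIoc _).symm
  have hsnd : AEMeasurable (fun p : ℝ × ℝ => N p.2) (volume.prod volume) :=
    hg.aemeasurable.enorm.comp_quasiMeasurePreserving
      MeasureTheory.Measure.quasiMeasurePreserving_snd
  have hFmeas : AEMeasurable (Function.uncurry fun x t => S.indicator (fun p => N p.2) (x, t))
      (volume.prod volume) := hsnd.indicator hSmeas
  have hswap := MeasureTheory.lintegral_lintegral_swap hFmeas
  have hinner : ∀ t, (∫⁻ x, S.indicator (fun p => N p.2) (x, t)) = N t * volume (A t) := by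
    intro t
    have heq : ∀ x, S.indicator (fun p => N p.2) (x, t)
        = (A t).indicator (fun _ => N t) x := by
      intro x
      by_cases hx : x ∈ A t
      · rw [Set.indicator_of_mem hx, Set.indicator_of_mem (show (x,t) ∈ S from hx)]
      · rw [Set.indicator_of_notMem hx, Set.indicator_of_notMem (show (x,t) ∉ S from hx)]
    simp_rw [heq]
    rw [lintegral_indicator_const (hAmeas t)]
  have hgfin : (∫⁻ t, N t) ≠ ⊤ := hg.hasFiniteIntegral.ne
  have hItot : (∫⁻ x, ENNReal.ofReal |f x - f (h x)|) ≤ ENNReal.ofReal γ2 * ∫⁻ t, N t := by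
    calc (∫⁻ x, ENNReal.ofReal |f x - f (h x)|)
        ≤ ∫⁻ x, ∫⁻ t, S.indicator (fun p => N p.2) (x, t) :=
          lintegral_mono fun x => (hptwise x).trans_eq
            (lintegral_congr fun t => (hind x t).symm)
      _ = ∫⁻ t, ∫⁻ x, S.indicator (fun p => N p.2) (x, t) := hswap
      _ = ∫⁻ t, N t * volume (A t) := lintegral_congr hinner
      _ ≤ ∫⁻ t, N t * ENNReal.ofReal γ2 :=
          lintegral_mono fun t => mul_le_mul_right (hAvol t) _
      _ = ENNReal.ofReal γ2 * ∫⁻ t, N t := by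
          simp_rw [mul_comm (N _) (ENNReal.ofReal γ2)]
          rw [lintegral_const_mul' _ _ ENNReal.ofReal_ne_top]
  have hbnd_ne : ENNReal.ofReal γ2 * (∫⁻ t, N t) ≠ ⊤ :=
    ENNReal.mul_ne_top ENNReal.ofReal_ne_top hgfin
  have hcont2 : Continuous fun x => f x - f (h x) := hfc.sub (hfc.comp hhc)
  have hofReal : ∀ x : ℝ, ((‖f x - f (h x)‖₊ : ℝ≥0) : ℝ≥0∞) = ENNReal.ofReal |f x - f (h x)| := by
    intro x
    rw [← Real.norm_eq_abs, ← enorm_eq_nnnorm, ofReal_norm]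
  have hfin : Integrable (fun x => f x - f (h x)) := by
    refine ⟨hcont2.aestronglyMeasurable, ?_⟩
    show (∫⁻ x, (‖f x - f (h x)‖₊ : ℝ≥0∞)) < ⊤
    calc (∫⁻ x, (‖f x - f (h x)‖₊ : ℝ≥0∞)) = ∫⁻ x, ENNReal.ofReal |f x - f (h x)| := by
          simp_rw [hofReal]
      _ ≤ ENNReal.ofReal γ2 * ∫⁻ t, N t := hItot
      _ < ⊤ := hbnd_ne.lt_top
  refine ⟨hfin, ?_⟩
  have hgint : ∫ t : ℝ, |g t| = (∫⁻ t, N t).toReal := by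
    have : ENNReal.ofReal (∫ t, ‖g t‖) = ∫⁻ t, N t :=
      MeasureTheory.ofReal_integral_norm_eq_lintegral_enorm hg
    have h2 : ∫ t : ℝ, |g t| = ∫ t : ℝ, ‖g t‖ := by simp [Real.norm_eq_abs]
    rw [h2, ← this, ENNReal.toReal_ofReal (integral_nonneg fun t => norm_nonneg _)]
  have hFint : ∫ x : ℝ, |f x - f (h x)| = (∫⁻ x, ENNReal.ofReal |f x - f (h x)|).toReal := by
    rw [integral_eq_lintegral_of_nonneg_ae (ae_of_all _ fun x => abs_nonneg _)
      hcont2.abs.aestronglyMeasurable]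
  have hstep : ∫ x : ℝ, |f x - f (h x)| ≤ γ2 * ∫ t : ℝ, |g t| := by
    rw [hFint, hgint]
    calc (∫⁻ x, ENNReal.ofReal |f x - f (h x)|).toReal
        ≤ (ENNReal.ofReal γ2 * ∫⁻ t, N t).toReal := ENNReal.toReal_mono hbnd_ne hItot
      _ = γ2 * (∫⁻ t, N t).toReal := by
          rw [ENNReal.toReal_mul, ENNReal.toReal_ofReal hγ2]
  have hmin : 0 < min 1 γ1 := lt_min one_pos hγ1
  have hγ2le : γ2 ≤ γ2 / min 1 γ1 := by
    rw [le_div_iff₀ hmin]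
    exact mul_le_of_le_one_right hγ2 (min_le_left _ _)
  calc ∫ x : ℝ, |f x - f (h x)| ≤ γ2 * ∫ t : ℝ, |g t| := hstep
    _ ≤ (γ2 / min 1 γ1) * ∫ t : ℝ, |g t| :=
        mul_le_mul_of_nonneg_right hγ2le (integral_nonneg fun t => abs_nonneg _)
end

section
/- There is a constant C₁ > 0, depending only on c and the Lipschitz constant of N on the convex hull of K, such that for all x, z ∈ ℝ: |Z^{2,0}(x) − Z^{1,0}(x)| ≤ C₁·R_0, |X^{2,0}(z) − X^{1,0}(z)| ≤ C₁·R_0, and |X^{1,0}(Z^{2,0}(x)) − x| ≤ C₁·R_0. -/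
open MeasureTheory Filter Set

/-- The shifted initial data in Lagrangian coordinates:
`w̃(t,z) i = w⁰(X⁰(z − λ̃ᵢ t)) i`. -/
noncomputable def wtld {n : ℕ} (tlam : Fin n → ℝ) (w0 : ℝ → Fin n → ℝ) (X0 : ℝ → ℝ)
    (t z : ℝ) : Fin n → ℝ :=
  fun i => w0 (X0 (z - tlam i * t)) i

/-- All the data attached to an initial datum `w⁰ ∈ L¹(ℝ; K)` for the rich, linearly
degenerate diagonal system with common entropy density `N`: the Lagrangian coordinate
`Z⁰` and its inverse `X⁰`, and the flow maps `X(t,·)` with inverses `Z(t,·)`.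
(By the relation `N·λᵢ − λ̃ᵢ = M`, the integrand defining `Xt` is independent of the
index `i`, whence the defining identity `defXt` is stated for every `i`.) -/
structure SolData {n : ℕ} (K : Set (Fin n → ℝ)) (N : (Fin n → ℝ) → ℝ)
    (lam : Fin n → (Fin n → ℝ) → ℝ) (tlam : Fin n → ℝ) where
  w0 : ℝ → Fin n → ℝ
  Z0 : ℝ → ℝ
  X0 : ℝ → ℝ
  Xt : ℝ → ℝ → ℝ
  Zt : ℝ → ℝ → ℝ
  meas : Measurable w0
  memK : ∀ x, w0 x ∈ K
  intgr : MeasureTheory.Integrable w0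
  defZ0 : ∀ x, Z0 x = ∫ ξ in (0:ℝ)..x, N (w0 ξ)
  invX0Z0 : ∀ x, X0 (Z0 x) = x
  invZ0X0 : ∀ z, Z0 (X0 z) = z
  defXt : ∀ (i : Fin n) (t z : ℝ), Xt t z = X0 z
      + ∫ τ in (0:ℝ)..t,
          (lam i (wtld tlam w0 X0 τ z) - tlam i / N (wtld tlam w0 X0 τ z))
  invXZ : ∀ t, 0 ≤ t → ∀ x, Xt t (Zt t x) = x
  invZX : ∀ t, 0 ≤ t → ∀ z, Zt t (Xt t z) = z

/-- The entropy solution associated with the data `d`: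
`wᵢ(t,x) = w⁰ᵢ(X⁰(Z(t,x) − λ̃ᵢ t))`. -/
noncomputable def SolData.sol {n : ℕ} {K : Set (Fin n → ℝ)} {N : (Fin n → ℝ) → ℝ}
    {lam : Fin n → (Fin n → ℝ) → ℝ} {tlam : Fin n → ℝ}
    (d : SolData K N lam tlam) (t x : ℝ) : Fin n → ℝ :=
  fun i => d.w0 (d.X0 (d.Zt t x - tlam i * t)) i

/-- `R₀ = ‖w^{2,0} − w^{1,0}‖_{L¹(ℝ;ℝⁿ)}`. -/
noncomputable def R0 {n : ℕ} {K : Set (Fin n → ℝ)} {N : (Fin n → ℝ) → ℝ}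
    {lam : Fin n → (Fin n → ℝ) → ℝ} {tlam : Fin n → ℝ}
    (d1 d2 : SolData K N lam tlam) : ℝ :=
  ∫ x : ℝ, ‖d2.w0 x - d1.w0 x‖

/-- `w0 ∈ W^{1,1}(ℝ;ℝⁿ)` with (weak) derivative `g`. -/
def W11 {n : ℕ} (w0 g : ℝ → Fin n → ℝ) : Prop :=
  MeasureTheory.Integrable g ∧ ∀ x y : ℝ, w0 y - w0 x = ∫ t in x..y, g t

theorem stmt_10
    (n : ℕ) (hn : 2 ≤ n)
    (K : Set (Fin n → ℝ)) (hK : IsCompact K)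
    (lam : Fin n → (Fin n → ℝ) → ℝ) (hlam : ∀ i, ContDiff ℝ 1 (lam i))
    (N : (Fin n → ℝ) → ℝ) (hN : ContDiff ℝ 1 N)
    (c C : ℝ) (hc : 0 < c) (hcC : c ≤ C)
    (hNbd : ∀ w ∈ convexHull ℝ K, c ≤ N w ∧ N w ≤ C)
    (M : (Fin n → ℝ) → ℝ) (tlam : Fin n → ℝ)
    (hrich : ∀ (w : Fin n → ℝ) (i : Fin n), N w * lam i w - tlam i = M w)
    (hstrict : ∀ w : Fin n → ℝ, StrictMono (fun i => lam i w))
    (hlindeg : ∀ (i : Fin n) (w v : Fin n → ℝ),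
      (∀ j, j ≠ i → w j = v j) → lam i w = lam i v)
    :
    ∃ C1 > (0:ℝ), ∀ d1 d2 : SolData K N lam tlam, ∀ x z : ℝ,
      |d2.Z0 x - d1.Z0 x| ≤ C1 * R0 d1 d2 ∧
      |d2.X0 z - d1.X0 z| ≤ C1 * R0 d1 d2 ∧
      |d1.X0 (d2.Z0 x) - x| ≤ C1 * R0 d1 d2 := by
  classical
  -- Lipschitz constant for `N` on a closed ball containing `K`
  obtain ⟨r, hKr⟩ := hK.isBounded.subset_closedBall 0
  have hNdiff : Differentiable ℝ N := hN.differentiable one_ne_zero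
  obtain ⟨L0, hL0⟩ := (isCompact_closedBall (0 : Fin n → ℝ) r).exists_bound_of_continuousOn
      ((hN.continuous_fderiv one_ne_zero).continuousOn)
  set L : ℝ := max L0 0 with hLdef
  have hLnn : 0 ≤ L := le_max_right _ _
  have hLip : ∀ a ∈ K, ∀ b ∈ K, ‖N b - N a‖ ≤ L * ‖b - a‖ := by
    intro a ha b hb
    exact Convex.norm_image_sub_le_of_norm_fderiv_le (fun x _ => hNdiff x)
      (fun x hx => le_trans (hL0 x hx) (le_max_left _ _))
      (convex_closedBall _ _) (hKr ha) (hKr hb)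
  have hic : (0:ℝ) < 1 / c := by positivity
  set C1 : ℝ := (L + 1) * (1 / c + 1) with hC1def
  have hC1pos : 0 < C1 := by positivity
  have hLC1 : L ≤ C1 := by nlinarith [mul_nonneg hLnn hic.le]
  have hLC' : L ≤ C1 * c := by
    have h1c : 1 / c * c = 1 := by field_simp
    nlinarith [mul_nonneg hLnn hc.le]
  refine ⟨C1, hC1pos, ?_⟩
  intro d1 d2 x z
  set g : ℝ → ℝ := fun ξ => ‖d2.w0 ξ - d1.w0 ξ‖ with hg
  have hgint : Integrable g := (d2.intgr.sub d1.intgr).norm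
  have hR0 : R0 d1 d2 = ∫ ξ, g ξ := rfl
  have hRnn : 0 ≤ R0 d1 d2 := by
    rw [hR0]; exact integral_nonneg fun ξ => norm_nonneg _
  -- interval integrability of `N ∘ w0`
  have hIcc : ∀ (d : SolData K N lam tlam) (a b : ℝ),
      IntervalIntegrable (fun ξ => N (d.w0 ξ)) volume a b := by
    intro d a b
    rw [intervalIntegrable_iff]
    refine Measure.integrableOn_of_bounded (M := C) ?_ ?_ ?_
    · rw [Set.uIoc]; exact measure_Ioc_lt_top.ne
    · exact (hN.continuous.measurable.comp d.meas).aestronglyMeasurable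
    · refine ae_of_all _ fun ξ => ?_
      have hm := hNbd _ (subset_convexHull ℝ K (d.memK ξ))
      rw [Real.norm_eq_abs, abs_of_nonneg (le_trans hc.le hm.1)]
      exact hm.2
  -- Step A : `|Z0₂ - Z0₁| ≤ L * R`
  have hA : ∀ y : ℝ, |d2.Z0 y - d1.Z0 y| ≤ L * R0 d1 d2 := by
    intro y
    have hsub : d2.Z0 y - d1.Z0 y
        = ∫ ξ in (0:ℝ)..y, (N (d2.w0 ξ) - N (d1.w0 ξ)) := by
      rw [d2.defZ0, d1.defZ0, intervalIntegral.integral_sub (hIcc d2 0 y) (hIcc d1 0 y)]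
    have hptw : ∀ ξ : ℝ, ‖N (d2.w0 ξ) - N (d1.w0 ξ)‖ ≤ L * g ξ := fun ξ =>
      hLip _ (d1.memK ξ) _ (d2.memK ξ)
    have hdint : Integrable (fun ξ => N (d2.w0 ξ) - N (d1.w0 ξ)) := by
      refine (hgint.const_mul L).mono' ?_ (ae_of_all _ hptw)
      exact ((hN.continuous.measurable.comp d2.meas).sub
        (hN.continuous.measurable.comp d1.meas)).aestronglyMeasurable
    rw [hsub, ← Real.norm_eq_abs]
    calc ‖∫ ξ in (0:ℝ)..y, (N (d2.w0 ξ) - N (d1.w0 ξ))‖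
        ≤ ∫ ξ in Set.uIoc (0:ℝ) y, ‖N (d2.w0 ξ) - N (d1.w0 ξ)‖ :=
          intervalIntegral.norm_integral_le_integral_norm_uIoc
      _ ≤ ∫ ξ in Set.uIoc (0:ℝ) y, L * g ξ := by
          exact setIntegral_mono_on hdint.norm.integrableOn
            ((hgint.const_mul L).integrableOn) measurableSet_uIoc fun ξ _ => hptw ξ
      _ ≤ ∫ ξ, L * g ξ := setIntegral_le_integral (hgint.const_mul L)
            (ae_of_all _ fun ξ => mul_nonneg hLnn (norm_nonneg _))
      _ = L * R0 d1 d2 := by rw [integral_const_mul, ← hR0]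
  -- Step B : lower bi-Lipschitz bound for `Z0`
  have key : ∀ (d : SolData K N lam tlam) (a b : ℝ), a ≤ b →
      c * (b - a) ≤ d.Z0 b - d.Z0 a := by
    intro d a b hab
    have hsub : d.Z0 b - d.Z0 a = ∫ ξ in a..b, N (d.w0 ξ) := by
      rw [d.defZ0, d.defZ0,
        intervalIntegral.integral_interval_sub_left (hIcc d 0 b) (hIcc d 0 a)]
    have hcint : c * (b - a) = ∫ _ in a..b, c := by
      rw [intervalIntegral.integral_const, smul_eq_mul, mul_comm]
    rw [hsub, hcint]
    exact intervalIntegral.integral_mono_on hab intervalIntegrable_const (hIcc d a b)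
      fun ξ _ => (hNbd _ (subset_convexHull ℝ K (d.memK ξ))).1
  have hB : ∀ (d : SolData K N lam tlam) (a b : ℝ),
      c * |b - a| ≤ |d.Z0 b - d.Z0 a| := by
    intro d a b
    rcases le_total a b with h | h
    · rw [abs_of_nonneg (sub_nonneg.2 h)]
      exact (key d a b h).trans (le_abs_self _)
    · rw [abs_sub_comm b a, abs_of_nonneg (sub_nonneg.2 h), abs_sub_comm (d.Z0 b)]
      exact (key d b a h).trans (le_abs_self _)
  -- cancellation lemma
  have hcancel : ∀ A : ℝ, c * A ≤ L * R0 d1 d2 → A ≤ C1 * R0 d1 d2 := by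
    intro A h
    have h2 : L * R0 d1 d2 ≤ C1 * c * R0 d1 d2 := mul_le_mul_of_nonneg_right hLC' hRnn
    have h3 : c * A ≤ c * (C1 * R0 d1 d2) := by nlinarith
    exact le_of_mul_le_mul_left h3 hc
  refine ⟨?_, ?_, ?_⟩
  · exact (hA x).trans (mul_le_mul_of_nonneg_right hLC1 hRnn)
  · refine hcancel _ ?_
    have h1 := hB d1 (d1.X0 z) (d2.X0 z)
    rw [d1.invZ0X0] at h1
    have h2 : |d1.Z0 (d2.X0 z) - z| ≤ L * R0 d1 d2 := by
      have := hA (d2.X0 z)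
      rw [d2.invZ0X0] at this
      rw [abs_sub_comm]
      exact this
    exact h1.trans h2
  · refine hcancel _ ?_
    have h1 := hB d1 x (d1.X0 (d2.Z0 x))
    rw [d1.invZ0X0] at h1
    exact h1.trans (hA x)
end

section
/- The functions ψ and φ are Lipschitz, strictly increasing bijections of ℝ, and for a.e. x ∈ ℝ: ψ'(x) = (μ^0(x) − λ̄^0_−)/(μ^0(x) − λ^0(x)) and φ'(x) = (μ̄^0_+ − λ^0(x))/(μ^0(x) − λ^0(x)); in particular both derivatives are bounded below by the positive constant (inf μ^0 − sup λ^0)/(sup μ^0 − inf λ^0), so the inverse functions of ψ and φ are Lipschitz and strictly increasing on ℝ. -/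
open MeasureTheory Filter Set

lemma bdd_intervalIntegrable {g : ℝ → ℝ} (hg : Measurable g) {C : ℝ}
    (hC : ∀ x, |g x| ≤ C) (u v : ℝ) : IntervalIntegrable g volume u v := by
  rw [intervalIntegrable_iff]
  refine Integrable.mono' (g := fun _ => C) ?_ (hg.aestronglyMeasurable.restrict) ?_
  · exact integrableOn_const measure_Ioc_lt_top.ne
  · exact ae_of_all _ fun x => (Real.norm_eq_abs _) ▸ hC x

lemma lipschitz_image_null {K : NNReal} {f : ℝ → ℝ} (hf : LipschitzWith K f)
    {N : Set ℝ} (hN : volume N = 0) : volume (f '' N) = 0 := by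
  have h := hf.hausdorffMeasure_image_le zero_le_one N
  rw [hausdorffMeasure_real] at h
  simpa [hN] using h

lemma ae_hasDerivAt_primitive {g : ℝ → ℝ} (hg : Measurable g) {C : ℝ}
    (h0 : ∀ x, 0 ≤ g x) (hC : ∀ x, g x ≤ C) :
    ∀ᵐ x : ℝ, HasDerivAt (fun y => ∫ t in (0:ℝ)..y, g t) (g x) x := by
  have habs : ∀ x, |g x| ≤ C := fun x => abs_le.2 ⟨by linarith [h0 x, hC x], hC x⟩
  have hint : ∀ u v : ℝ, IntervalIntegrable g volume u v := bdd_intervalIntegrable hg habs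
  set F : ℝ → ℝ := fun y => ∫ t in (0:ℝ)..y, g t with hF
  have hmono : Monotone F := by
    intro u v huv
    have h1 : F v - F u = ∫ t in u..v, g t := by
      rw [hF]; exact intervalIntegral.integral_interval_sub_left (hint 0 v) (hint 0 u)
    have h2 : 0 ≤ ∫ t in u..v, g t := intervalIntegral.integral_nonneg huv fun x _ => h0 x
    linarith
  have hcont : Continuous F := intervalIntegral.continuous_primitive hint 0
  set S : StieltjesFunction ℝ := ⟨F, hmono, fun x => hcont.continuousWithinAt⟩ with hS
  have hSm : S.measure = volume.withDensity (fun x => ENNReal.ofReal (g x)) := by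
    refine Measure.ext_of_Ioc _ _ ?_
    intro u v huv
    rw [StieltjesFunction.measure_Ioc, withDensity_apply _ measurableSet_Ioc]
    have hig : IntegrableOn g (Ioc u v) volume := by
      rw [← intervalIntegrable_iff_integrableOn_Ioc_of_le huv.le]; exact hint u v
    rw [← ofReal_integral_eq_lintegral_ofReal hig (ae_of_all _ h0)]
    congr 1
    have h1 : S v - S u = ∫ t in u..v, g t :=
      intervalIntegral.integral_interval_sub_left (hint 0 v) (hint 0 u)
    rw [h1, intervalIntegral.integral_of_le huv.le]
  have hrn := Measure.rnDeriv_withDensity volume hg.ennreal_ofReal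
  have hae := S.ae_hasDerivAt
  rw [hSm] at hae
  filter_upwards [hae, hrn] with x hx hx2
  rw [hx2, ENNReal.toReal_ofReal (h0 x)] at hx
  exact hx

lemma subst_integral {Z0 X0 ρ : ℝ → ℝ} (f : ℝ → ℝ) {K : NNReal}
    (hρ0 : ∀ x, 0 ≤ ρ x)
    (hZder : ∀ᵐ x : ℝ, HasDerivAt Z0 (ρ x) x)
    (hZLip : LipschitzWith K Z0) (hZmono : StrictMono Z0)
    (hZX : ∀ z, Z0 (X0 z) = z)
    {x1 x2 : ℝ} :
    ∫ y in Ioc (Z0 x1) (Z0 x2), f y = ∫ x in Ioc x1 x2, ρ x * f (Z0 x) := by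
  set B : Set ℝ := {x | ¬ HasDerivAt Z0 (ρ x) x} with hB
  have hBnull : volume B = 0 := hZder
  set N : Set ℝ := toMeasurable volume B with hNdef
  have hNnull : volume N = 0 := by rw [hNdef, measure_toMeasurable]; exact hBnull
  have hNm : MeasurableSet N := measurableSet_toMeasurable _ _
  set s : Set ℝ := Ioc x1 x2 \ N with hs
  have hsm : MeasurableSet s := measurableSet_Ioc.diff hNm
  have hderiv : ∀ x ∈ s, HasDerivWithinAt Z0 (ρ x) s x := by
    intro x hx
    have : x ∉ B := fun hxB => hx.2 (subset_toMeasurable _ _ hxB)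
    exact (not_not.1 this).hasDerivWithinAt
  have hinj : InjOn Z0 s := hZmono.injective.injOn
  have heq := integral_image_eq_integral_abs_deriv_smul hsm hderiv hinj f
  have himIoc : Z0 '' (Ioc x1 x2) = Ioc (Z0 x1) (Z0 x2) := by
    ext y
    constructor
    · rintro ⟨x, hx, rfl⟩
      exact ⟨hZmono hx.1, hZmono.le_iff_le.2 hx.2⟩
    · intro hy
      refine ⟨X0 y, ⟨?_, ?_⟩, hZX y⟩
      · have : Z0 x1 < Z0 (X0 y) := by rw [hZX]; exact hy.1
        exact hZmono.lt_iff_lt.1 this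
      · have : Z0 (X0 y) ≤ Z0 x2 := by rw [hZX]; exact hy.2
        exact hZmono.le_iff_le.1 this
  have himdiff : Z0 '' s = Ioc (Z0 x1) (Z0 x2) \ Z0 '' (Ioc x1 x2 ∩ N) := by
    rw [← himIoc, ← image_diff hZmono.injective]
    rw [diff_self_inter, hs]
  have hZNnull : volume (Z0 '' (Ioc x1 x2 ∩ N)) = 0 :=
    lipschitz_image_null hZLip (measure_mono_null inter_subset_right hNnull)
  have haeim : Z0 '' s =ᵐ[volume] Ioc (Z0 x1) (Z0 x2) := by
    rw [himdiff]
    exact diff_ae_eq_self.2 (measure_mono_null inter_subset_right hZNnull)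
  have haes : s =ᵐ[volume] Ioc x1 x2 := by
    rw [hs]
    exact diff_ae_eq_self.2 (measure_mono_null inter_subset_right hNnull)
  calc ∫ y in Ioc (Z0 x1) (Z0 x2), f y = ∫ y in Z0 '' s, f y :=
        (setIntegral_congr_set haeim).symm
    _ = ∫ x in s, |ρ x| • f (Z0 x) := heq
    _ = ∫ x in Ioc x1 x2, |ρ x| • f (Z0 x) := setIntegral_congr_set haes
    _ = ∫ x in Ioc x1 x2, ρ x * f (Z0 x) := by
        refine setIntegral_congr_fun measurableSet_Ioc fun x _ => ?_
        rw [abs_of_nonneg (hρ0 x), smul_eq_mul]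

lemma key_lemma {g : ℝ → ℝ} (hg : Measurable g) {m M : ℝ} (hm : 0 < m)
    (hlb : ∀ x, m ≤ g x) (hub : ∀ x, g x ≤ M) {ψ : ℝ → ℝ}
    (hrep : ∀ x1 x2 : ℝ, ψ x2 - ψ x1 = ∫ t in x1..x2, g t) :
    (∃ L : NNReal, LipschitzWith L ψ) ∧ StrictMono ψ ∧ Function.Bijective ψ ∧
    (∀ᵐ x : ℝ, HasDerivAt ψ (g x) x) ∧
    (∃ L : NNReal, LipschitzWith L (Function.invFun ψ)) ∧
    StrictMono (Function.invFun ψ) := by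
  have hM : 0 < M := lt_of_lt_of_le hm ((hlb 0).trans (hub 0))
  have habs : ∀ x, |g x| ≤ M := fun x => abs_le.2 ⟨by linarith [hlb x, hm.le, hM], hub x⟩
  have hint : ∀ u v : ℝ, IntervalIntegrable g volume u v := bdd_intervalIntegrable hg habs
  have hinc : ∀ {u v : ℝ}, u ≤ v → m * (v - u) ≤ ψ v - ψ u ∧ ψ v - ψ u ≤ M * (v - u) := by
    intro u v huv
    rw [hrep u v]
    constructor
    · calc m * (v - u) = ∫ _ in u..v, m := by rw [intervalIntegral.integral_const, smul_eq_mul, mul_comm]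
        _ ≤ ∫ t in u..v, g t :=
          intervalIntegral.integral_mono_on huv intervalIntegrable_const (hint u v)
            (fun x _ => hlb x)
    · calc (∫ t in u..v, g t) ≤ ∫ _ in u..v, M :=
          intervalIntegral.integral_mono_on huv (hint u v) intervalIntegrable_const
            (fun x _ => hub x)
        _ = M * (v - u) := by rw [intervalIntegral.integral_const, smul_eq_mul, mul_comm]
  have hlip : LipschitzWith M.toNNReal ψ := by
    refine LipschitzWith.of_dist_le_mul fun x y => ?_
    rw [Real.dist_eq, Real.dist_eq, Real.coe_toNNReal _ hM.le]
    rcases le_total x y with h | h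
    · have := hinc h
      rw [abs_of_nonpos (by nlinarith [this.1] : ψ x - ψ y ≤ 0), abs_of_nonpos (by linarith)]
      linarith [this.2]
    · have := hinc h
      rw [abs_of_nonneg (by nlinarith [this.1] : 0 ≤ ψ x - ψ y), abs_of_nonneg (by linarith)]
      linarith [this.2]
  have hmono : StrictMono ψ := by
    intro x y hxy
    have := (hinc hxy.le).1
    nlinarith
  have hsurj : Function.Surjective ψ := by
    refine Continuous.surjective hlip.continuous ?_ ?_
    · refine tendsto_atTop_mono' _ ?_ (tendsto_atTop_add_const_left _ (ψ 0)
        (tendsto_id.const_mul_atTop hm))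
      filter_upwards [eventually_ge_atTop (0:ℝ)] with x hx
      have := (hinc hx).1
      simp only [id]
      linarith
    · refine tendsto_atBot_mono' _ ?_ (tendsto_atBot_add_const_left _ (ψ 0)
        (tendsto_id.const_mul_atBot hm))
      filter_upwards [eventually_le_atBot (0:ℝ)] with x hx
      have := (hinc hx).1
      simp only [id]
      linarith
  have hbij : Function.Bijective ψ := ⟨hmono.injective, hsurj⟩
  have hdar : ∀ᵐ x : ℝ, HasDerivAt ψ (g x) x := by
    have hψeq : ψ = fun x => ψ 0 + ∫ t in (0:ℝ)..x, g t := by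
      funext x
      have := hrep 0 x
      linarith
    rw [hψeq]
    filter_upwards [ae_hasDerivAt_primitive hg (fun x => hm.le.trans (hlb x)) hub] with x hx
    exact hx.const_add (ψ 0)
  have hri : ∀ y, ψ (Function.invFun ψ y) = y := fun y => Function.rightInverse_invFun hsurj y
  have hinvmono : StrictMono (Function.invFun ψ) := by
    intro u v huv
    by_contra hle
    push_neg at hle
    have := hmono.le_iff_le.2 hle
    rw [hri, hri] at this
    exact absurd this (not_le.2 huv)
  have hinvlip : LipschitzWith m⁻¹.toNNReal (Function.invFun ψ) := by
    refine LipschitzWith.of_dist_le_mul fun x y => ?_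
    rw [Real.dist_eq, Real.dist_eq, Real.coe_toNNReal _ (by positivity)]
    have key : ∀ u v : ℝ, u ≤ v →
        Function.invFun ψ v - Function.invFun ψ u ≤ m⁻¹ * (v - u) := by
      intro u v huv
      have hle : Function.invFun ψ u ≤ Function.invFun ψ v := by
        rcases eq_or_lt_of_le huv with rfl | h
        · exact le_refl _
        · exact (hinvmono h).le
      have := (hinc hle).1
      rw [hri, hri] at this
      rw [inv_mul_eq_div, le_div_iff₀ hm]
      linarith
    rcases le_total x y with h | h
    · have h2 := key x y h
      have hle : Function.invFun ψ x ≤ Function.invFun ψ y := by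
        rcases eq_or_lt_of_le h with rfl | h'
        · exact le_refl _
        · exact (hinvmono h').le
      rw [abs_of_nonpos (by linarith), abs_of_nonpos (by linarith)]
      linarith
    · have h2 := key y x h
      have hle : Function.invFun ψ y ≤ Function.invFun ψ x := by
        rcases eq_or_lt_of_le h with rfl | h'
        · exact le_refl _
        · exact (hinvmono h').le
      rw [abs_of_nonneg (by linarith), abs_of_nonneg (by linarith)]
      linarith
  exact ⟨⟨M.toNNReal, hlip⟩, hmono, hbij, hdar, ⟨m⁻¹.toNNReal, hinvlip⟩, hinvmono⟩
theorem stmt_16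
    (a : ℝ) (ha : 0 < a)
    (lam0 mu0 : ℝ → ℝ) (hlm : Measurable lam0) (hmm : Measurable mu0)
    (hlbdd : BddAbove (Set.range lam0)) (hlbdd' : BddBelow (Set.range lam0))
    (hmbdd : BddAbove (Set.range mu0)) (hmbdd' : BddBelow (Set.range mu0))
    (hsep : sSup (Set.range lam0) < sInf (Set.range mu0))
    (lbar mbar : ℝ)
    (hlL1 : Integrable (fun x => lam0 x - lbar))
    (hmL1 : Integrable (fun x => mu0 x - mbar))
    (hllim : Tendsto lam0 atBot (nhds lbar))
    (hmlim : Tendsto mu0 atTop (nhds mbar))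
    (Z0 X0 : ℝ → ℝ)
    (hZ0 : ∀ x, Z0 x = ∫ ξ in (0:ℝ)..x, 2 * a / (mu0 ξ - lam0 ξ))
    (hX0Z0 : ∀ x, X0 (Z0 x) = x) (hZ0X0 : ∀ z, Z0 (X0 z) = z)
    (X : ℝ → ℝ → ℝ)
    (hX : ∀ t z, X t z = (1 / (2 * a)) * (∫ ξ in (0:ℝ)..(z + a * t), mu0 (X0 ξ))
        - (1 / (2 * a)) * (∫ ξ in (0:ℝ)..(z - a * t), lam0 (X0 ξ)))
    (H I : ℝ → ℝ)
    (hH : ∀ y, H y = ∫ ξ in (1:ℝ)..y, (lam0 (X0 ξ) - lbar))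
    (hI : ∀ y, I y = ∫ ξ in (1:ℝ)..y, (mu0 (X0 ξ) - mbar))
    (Hbar Ibar : ℝ)
    (hHbar : Tendsto H atBot (nhds Hbar))
    (hIbar : Tendsto I atTop (nhds Ibar))
    (ψ φ : ℝ → ℝ)
    (hψ : ∀ x, ψ x = x + (1 / (2 * a)) * (H (Z0 x) - Hbar))
    (hφ : ∀ x, φ x = x - (1 / (2 * a)) * (I (Z0 x) - Ibar)) :
    (∃ L : NNReal, LipschitzWith L ψ) ∧ StrictMono ψ ∧ Function.Bijective ψ ∧
    (∃ L : NNReal, LipschitzWith L φ) ∧ StrictMono φ ∧ Function.Bijective φ ∧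
    (∀ᵐ x : ℝ, HasDerivAt ψ ((mu0 x - lbar) / (mu0 x - lam0 x)) x) ∧
    (∀ᵐ x : ℝ, HasDerivAt φ ((mbar - lam0 x) / (mu0 x - lam0 x)) x) ∧
    (0 < (sInf (Set.range mu0) - sSup (Set.range lam0))
        / (sSup (Set.range mu0) - sInf (Set.range lam0))) ∧
    (∀ x : ℝ, (sInf (Set.range mu0) - sSup (Set.range lam0))
        / (sSup (Set.range mu0) - sInf (Set.range lam0))
        ≤ (mu0 x - lbar) / (mu0 x - lam0 x)) ∧
    (∀ x : ℝ, (sInf (Set.range mu0) - sSup (Set.range lam0))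
        / (sSup (Set.range mu0) - sInf (Set.range lam0))
        ≤ (mbar - lam0 x) / (mu0 x - lam0 x)) ∧
    (∃ L : NNReal, LipschitzWith L (Function.invFun ψ)) ∧
    StrictMono (Function.invFun ψ) ∧
    (∃ L : NNReal, LipschitzWith L (Function.invFun φ)) ∧
    StrictMono (Function.invFun φ) := by
  -- basic bounds
  have hlam_le : ∀ x, lam0 x ≤ sSup (Set.range lam0) := fun x => le_csSup hlbdd ⟨x, rfl⟩
  have hlam_ge : ∀ x, sInf (Set.range lam0) ≤ lam0 x := fun x => csInf_le hlbdd' ⟨x, rfl⟩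
  have hmu_le : ∀ x, mu0 x ≤ sSup (Set.range mu0) := fun x => le_csSup hmbdd ⟨x, rfl⟩
  have hmu_ge : ∀ x, sInf (Set.range mu0) ≤ mu0 x := fun x => csInf_le hmbdd' ⟨x, rfl⟩
  set Sl := sSup (Set.range lam0) with hSl
  set il := sInf (Set.range lam0) with hil
  set Sm := sSup (Set.range mu0) with hSm
  set im := sInf (Set.range mu0) with him
  have hlbar_le : lbar ≤ Sl := le_of_tendsto hllim (Eventually.of_forall hlam_le)
  have hlbar_ge : il ≤ lbar := ge_of_tendsto hllim (Eventually.of_forall hlam_ge)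
  have hmbar_le : mbar ≤ Sm := le_of_tendsto hmlim (Eventually.of_forall hmu_le)
  have hmbar_ge : im ≤ mbar := ge_of_tendsto hmlim (Eventually.of_forall hmu_ge)
  have hilSl : il ≤ Sl := (hlam_ge 0).trans (hlam_le 0)
  have himSm : im ≤ Sm := (hmu_ge 0).trans (hmu_le 0)
  have hc : (0:ℝ) < im - Sl := sub_pos.2 hsep
  have hd : (0:ℝ) < Sm - il := by linarith
  have hden1 : ∀ x, im - Sl ≤ mu0 x - lam0 x := fun x => by linarith [hmu_ge x, hlam_le x]
  have hden2 : ∀ x, mu0 x - lam0 x ≤ Sm - il := fun x => by linarith [hmu_le x, hlam_ge x]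
  have hdenpos : ∀ x, 0 < mu0 x - lam0 x := fun x => lt_of_lt_of_le hc (hden1 x)
  have ha2 : (0:ℝ) < 2 * a := by linarith
  -- the density ρ
  set ρ : ℝ → ℝ := fun x => 2 * a / (mu0 x - lam0 x) with hρdef
  have hρmeas : Measurable ρ := measurable_const.div (hmm.sub hlm)
  have hρ0 : ∀ x, 0 ≤ ρ x := fun x => (div_pos ha2 (hdenpos x)).le
  have hρlb : ∀ x, 2 * a / (Sm - il) ≤ ρ x := fun x =>
    div_le_div_of_nonneg_left ha2.le (hdenpos x) (hden2 x)
  have hρub : ∀ x, ρ x ≤ 2 * a / (im - Sl) := fun x =>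
    div_le_div_of_nonneg_left ha2.le hc (hden1 x)
  have hρm_pos : (0:ℝ) < 2 * a / (Sm - il) := div_pos ha2 hd
  have hZinc : ∀ u v : ℝ, Z0 v - Z0 u = ∫ t in u..v, ρ t := by
    have II := bdd_intervalIntegrable hρmeas
      (C := 2 * a / (im - Sl)) (fun x => abs_le.2 ⟨by linarith [hρ0 x, hρub x], hρub x⟩)
    intro u v
    rw [hZ0 u, hZ0 v]
    exact intervalIntegral.integral_interval_sub_left (II 0 v) (II 0 u)
  obtain ⟨⟨KZ, hZlip⟩, hZmono, -, hZder, -, -⟩ :=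
    key_lemma hρmeas hρm_pos hρlb hρub hZinc
  have hX0mono : Monotone X0 := by
    intro z1 z2 h
    by_contra hlt
    push_neg at hlt
    have := hZmono hlt
    rw [hZ0X0, hZ0X0] at this
    exact absurd h (not_le.2 this)
  have hX0meas : Measurable X0 := hX0mono.measurable
  -- the derivatives
  set gψ : ℝ → ℝ := fun x => (mu0 x - lbar) / (mu0 x - lam0 x) with hgψdef
  set gφ : ℝ → ℝ := fun x => (mbar - lam0 x) / (mu0 x - lam0 x) with hgφdef
  set m0 : ℝ := (im - Sl) / (Sm - il) with hm0def
  have hm0pos : 0 < m0 := div_pos hc hd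
  have hgψmeas : Measurable gψ := (hmm.sub measurable_const).div (hmm.sub hlm)
  have hgφmeas : Measurable gφ := (measurable_const.sub hlm).div (hmm.sub hlm)
  have hgψlb : ∀ x, m0 ≤ gψ x := fun x =>
    div_le_div₀ (by linarith [hmu_ge x]) (by linarith [hmu_ge x]) (hdenpos x) (hden2 x)
  have hgψub : ∀ x, gψ x ≤ (Sm - il) / (im - Sl) := fun x =>
    div_le_div₀ hd.le (by linarith [hmu_le x]) hc (hden1 x)
  have hgφlb : ∀ x, m0 ≤ gφ x := fun x =>
    div_le_div₀ (by linarith [hlam_le x]) (by linarith [hlam_le x]) (hdenpos x) (hden2 x)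
  have hgφub : ∀ x, gφ x ≤ (Sm - il) / (im - Sl) := fun x =>
    div_le_div₀ hd.le (by linarith [hlam_ge x]) hc (hden1 x)
  -- representation of ψ
  have hlamX : ∀ u v : ℝ, IntervalIntegrable (fun y => lam0 (X0 y) - lbar) volume u v :=
    bdd_intervalIntegrable ((hlm.comp hX0meas).sub measurable_const) (C := Sl - il)
      (fun y => abs_le.2 ⟨by linarith [hlam_ge (X0 y)], by linarith [hlam_le (X0 y)]⟩)
  have hmuX : ∀ u v : ℝ, IntervalIntegrable (fun y => mu0 (X0 y) - mbar) volume u v :=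
    bdd_intervalIntegrable ((hmm.comp hX0meas).sub measurable_const) (C := Sm - im)
      (fun y => abs_le.2 ⟨by linarith [hmu_ge (X0 y)], by linarith [hmu_le (X0 y)]⟩)
  have hρbd : ∀ x, |ρ x| ≤ 2 * a / (im - Sl) :=
    fun x => abs_le.2 ⟨by linarith [hρ0 x, hρub x], hρub x⟩
  have hρlam : ∀ u v : ℝ, IntervalIntegrable (fun t => ρ t * (lam0 t - lbar)) volume u v :=
    bdd_intervalIntegrable (hρmeas.mul (hlm.sub measurable_const))
      (C := (2 * a / (im - Sl)) * (Sl - il)) (fun t => by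
        rw [abs_mul]
        refine mul_le_mul (hρbd t) (abs_le.2 ⟨?_, ?_⟩) (abs_nonneg _) ?_
        · linarith [hlam_ge t]
        · linarith [hlam_le t]
        · linarith [hρ0 t, hρub t, hc, div_pos ha2 hc])
  have hρmu : ∀ u v : ℝ, IntervalIntegrable (fun t => ρ t * (mu0 t - mbar)) volume u v :=
    bdd_intervalIntegrable (hρmeas.mul (hmm.sub measurable_const))
      (C := (2 * a / (im - Sl)) * (Sm - im)) (fun t => by
        rw [abs_mul]
        refine mul_le_mul (hρbd t) (abs_le.2 ⟨?_, ?_⟩) (abs_nonneg _) ?_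
        · linarith [hmu_ge t]
        · linarith [hmu_le t]
        · linarith [hρ0 t, hρub t, hc, div_pos ha2 hc])
  have hψrep : ∀ x1 x2 : ℝ, ψ x2 - ψ x1 = ∫ t in x1..x2, gψ t := by
    have hle : ∀ x1 x2 : ℝ, x1 ≤ x2 → ψ x2 - ψ x1 = ∫ t in x1..x2, gψ t := by
      intro x1 x2 h12
      have hsub := subst_integral (Z0 := Z0) (X0 := X0) (ρ := ρ)
        (fun y => lam0 (X0 y) - lbar) hρ0 hZder hZlip hZmono hZ0X0 (x1 := x1) (x2 := x2)
      have hZ12 : Z0 x1 ≤ Z0 x2 := hZmono.monotone h12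
      have hHd : H (Z0 x2) - H (Z0 x1) = ∫ y in (Z0 x1)..(Z0 x2), (lam0 (X0 y) - lbar) := by
        rw [hH, hH]
        exact intervalIntegral.integral_interval_sub_left (hlamX 1 (Z0 x2)) (hlamX 1 (Z0 x1))
      rw [intervalIntegral.integral_of_le hZ12, hsub] at hHd
      have hHd2 : H (Z0 x2) - H (Z0 x1) = ∫ x in x1..x2, ρ x * (lam0 x - lbar) := by
        rw [hHd, ← intervalIntegral.integral_of_le h12]
        refine intervalIntegral.integral_congr fun x _ => ?_
        simp only [hX0Z0]
      have e1 : ψ x2 - ψ x1 = (x2 - x1) + (1 / (2 * a)) * (H (Z0 x2) - H (Z0 x1)) := by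
        rw [hψ, hψ]; ring
      rw [e1, hHd2, ← intervalIntegral.integral_const_mul]
      have e2 : (x2 - x1 : ℝ) = ∫ _ in x1..x2, (1:ℝ) := by simp
      rw [e2, ← intervalIntegral.integral_add intervalIntegrable_const
        ((hρlam x1 x2).const_mul _)]
      refine intervalIntegral.integral_congr fun t _ => ?_
      have hne : mu0 t - lam0 t ≠ 0 := ne_of_gt (hdenpos t)
      show 1 + 1 / (2 * a) * (2 * a / (mu0 t - lam0 t) * (lam0 t - lbar))
          = (mu0 t - lbar) / (mu0 t - lam0 t)
      field_simp
      all_goals ring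
    intro x1 x2
    rcases le_total x1 x2 with h | h
    · exact hle x1 x2 h
    · have h1 := hle x2 x1 h
      have h2 : (∫ t in x1..x2, gψ t) = - ∫ t in x2..x1, gψ t :=
        intervalIntegral.integral_symm x2 x1
      linarith
  have hφrep : ∀ x1 x2 : ℝ, φ x2 - φ x1 = ∫ t in x1..x2, gφ t := by
    have hle : ∀ x1 x2 : ℝ, x1 ≤ x2 → φ x2 - φ x1 = ∫ t in x1..x2, gφ t := by
      intro x1 x2 h12
      have hsub := subst_integral (Z0 := Z0) (X0 := X0) (ρ := ρ)
        (fun y => mu0 (X0 y) - mbar) hρ0 hZder hZlip hZmono hZ0X0 (x1 := x1) (x2 := x2)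
      have hZ12 : Z0 x1 ≤ Z0 x2 := hZmono.monotone h12
      have hHd : I (Z0 x2) - I (Z0 x1) = ∫ y in (Z0 x1)..(Z0 x2), (mu0 (X0 y) - mbar) := by
        rw [hI, hI]
        exact intervalIntegral.integral_interval_sub_left (hmuX 1 (Z0 x2)) (hmuX 1 (Z0 x1))
      rw [intervalIntegral.integral_of_le hZ12, hsub] at hHd
      have hHd2 : I (Z0 x2) - I (Z0 x1) = ∫ x in x1..x2, ρ x * (mu0 x - mbar) := by
        rw [hHd, ← intervalIntegral.integral_of_le h12]
        refine intervalIntegral.integral_congr fun x _ => ?_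
        simp only [hX0Z0]
      have e1 : φ x2 - φ x1 = (x2 - x1) - (1 / (2 * a)) * (I (Z0 x2) - I (Z0 x1)) := by
        rw [hφ, hφ]; ring
      rw [e1, hHd2, ← intervalIntegral.integral_const_mul]
      have e2 : (x2 - x1 : ℝ) = ∫ _ in x1..x2, (1:ℝ) := by simp
      rw [e2, ← intervalIntegral.integral_sub intervalIntegrable_const
        ((hρmu x1 x2).const_mul _)]
      refine intervalIntegral.integral_congr fun t _ => ?_
      have hne : mu0 t - lam0 t ≠ 0 := ne_of_gt (hdenpos t)
      show 1 - 1 / (2 * a) * (2 * a / (mu0 t - lam0 t) * (mu0 t - mbar))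
          = (mbar - lam0 t) / (mu0 t - lam0 t)
      field_simp
      all_goals ring
    intro x1 x2
    rcases le_total x1 x2 with h | h
    · exact hle x1 x2 h
    · have h1 := hle x2 x1 h
      have h2 : (∫ t in x1..x2, gφ t) = - ∫ t in x2..x1, gφ t :=
        intervalIntegral.integral_symm x2 x1
      linarith
  obtain ⟨hL1, hSM1, hBij1, hD1, hIL1, hISM1⟩ :=
    key_lemma hgψmeas hm0pos hgψlb hgψub hψrep
  obtain ⟨hL2, hSM2, hBij2, hD2, hIL2, hISM2⟩ :=
    key_lemma hgφmeas hm0pos hgφlb hgφub hφrep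
  exact ⟨hL1, hSM1, hBij1, hL2, hSM2, hBij2, hD1, hD2, hm0pos, hgψlb, hgφlb,
    hIL1, hISM1, hIL2, hISM2⟩
end
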